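/- arXiv:1811.11000 — 3 statements merged into one kernel-verified Lean document; each statement's English description precedes it below -/
import Mathlib

section
/- Let X be a compact Hausdorff space, T : X → X a continuous map with topological entropy h(T) = 0, and x₀ ∈ X a point whose forward orbit {Tⁿx₀ : n ∈ ℕ} is dense in X. Then there exists a continuous surjection π : E₀(ℕ) → X such that π ∘ A = T ∘ π and π(ι(0)) = x₀. -/
open Filter Set Topology

namespace Anqie

variable {X : Type*} [TopologicalSpace X]

/-- `𝒰` is an open cover of `X`. -/
def IsOpenCover (𝒰 : Set (Set X)) : Prop :=
  (∀ U ∈ 𝒰, IsOpen U) ∧ ⋃₀ 𝒰 = Set.univ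

/-- The common refinement `𝒰 ∨ T⁻¹ 𝒰 ∨ ⋯ ∨ T^{-(n-1)} 𝒰`. -/
def iterJoin (T : X → X) (𝒰 : Set (Set X)) (n : ℕ) : Set (Set X) :=
  {V | ∃ u : Fin n → Set X, (∀ j, u j ∈ 𝒰) ∧ V = ⋂ j : Fin n, T^[(j : ℕ)] ⁻¹' u j}

/-- The minimal cardinality of a finite subcover of `𝒱` (junk value `0` if none exists). -/
noncomputable def coverNum (𝒱 : Set (Set X)) : ℕ :=
  sInf {k | ∃ F : Finset (Set X), (↑F : Set (Set X)) ⊆ 𝒱 ∧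
    ⋃₀ (↑F : Set (Set X)) = Set.univ ∧ F.card = k}

/-- The Adler–Konheim–McAndrew entropy of `T` relative to the open cover `𝒰`. -/
noncomputable def coverEntropy (T : X → X) (𝒰 : Set (Set X)) : EReal :=
  Filter.atTop.limsup fun n : ℕ =>
    ((Real.log (coverNum (iterJoin T 𝒰 n)) / n : ℝ) : EReal)

/-- The Adler–Konheim–McAndrew topological entropy of `T`, via open covers. -/
noncomputable def entropy (T : X → X) : EReal :=
  ⨆ 𝒰 ∈ {𝒰 : Set (Set X) | IsOpenCover 𝒰}, coverEntropy T 𝒰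

/-- The set of forward-orbit sequences of `f : ℕ → X` inside `X^ℕ`. -/
def orbitSet (f : ℕ → X) : Set (ℕ → X) :=
  {ω | ∃ n : ℕ, ∀ k : ℕ, ω k = f (n + k)}

/-- `X_f`, the closure of the set of orbit sequences in the product topology. -/
def orbitClosure (f : ℕ → X) : Set (ℕ → X) := closure (orbitSet f)

lemma shift_mem_orbitClosure (f : ℕ → X) {ω : ℕ → X} (hω : ω ∈ orbitClosure f) :
    (fun k => ω (k + 1)) ∈ orbitClosure f := by
  have hcont : Continuous fun ω : ℕ → X => fun k => ω (k + 1) :=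
    continuous_pi fun k => continuous_apply (k + 1)
  have hmaps : MapsTo (fun ω : ℕ → X => fun k => ω (k + 1)) (orbitSet f) (orbitSet f) := by
    rintro ω ⟨n, hn⟩
    refine ⟨n + 1, fun k => ?_⟩
    show ω (k + 1) = f (n + 1 + k)
    rw [hn (k + 1)]; congr 1; omega
  exact map_mem_closure hcont hω hmaps

/-- `B_f`, the left shift restricted to `X_f`. -/
def shiftOn (f : ℕ → X) : orbitClosure f → orbitClosure f :=
  fun ω => ⟨fun k => (ω : ℕ → X) (k + 1), shift_mem_orbitClosure f ω.2⟩

/-- The anqie entropy of a map `f : ℕ → X`: the AKM topological entropy of the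
left shift on `X_f`. -/
noncomputable def AE (f : ℕ → X) : EReal := entropy (shiftOn f)

end Anqie

namespace Anqie

/-- The elements of `E₀`: bounded arithmetic functions with zero anqie entropy. -/
abbrev E0sub : Type := {f : BoundedContinuousFunction ℕ ℂ // AE ⇑f = 0}

/-- The character space (maximal ideal space) `E₀(ℕ)` of the commutative unital
C*-algebra `E₀`: nonzero multiplicative linear functionals on `E₀`, as a subset of
`E₀ → ℂ` with the topology of pointwise (weak*) convergence. -/
def CharSpace : Set (E0sub → ℂ) :=
  {φ | (∃ f, φ f ≠ 0) ∧
    (∀ f g h : E0sub, (h : BoundedContinuousFunction ℕ ℂ) =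
      (f : BoundedContinuousFunction ℕ ℂ) + g → φ h = φ f + φ g) ∧
    (∀ (c : ℂ) (f g : E0sub), (g : BoundedContinuousFunction ℕ ℂ) =
      c • (f : BoundedContinuousFunction ℕ ℂ) → φ g = c * φ f) ∧
    (∀ f g h : E0sub, (h : BoundedContinuousFunction ℕ ℂ) =
      (f : BoundedContinuousFunction ℕ ℂ) * g → φ h = φ f * φ g)}

end Anqie

namespace Anqie

lemma entropy_of_subsingleton {Y : Type*} [TopologicalSpace Y] [Nonempty Y]
    [Subsingleton Y] (T : Y → Y) : entropy T = 0 := by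
  have key : ∀ 𝒰 : Set (Set Y), IsOpenCover 𝒰 → coverEntropy T 𝒰 = 0 := by
    intro 𝒰 h𝒰
    have hnum : ∀ n : ℕ, coverNum (iterJoin T 𝒰 n) ≤ 1 := by
      intro n
      obtain ⟨y⟩ := ‹Nonempty Y›
      obtain ⟨U, hU𝒰, hyU⟩ : ∃ U ∈ 𝒰, y ∈ U := by
        have : y ∈ ⋃₀ 𝒰 := h𝒰.2 ▸ Set.mem_univ y
        exact this
      have hUuniv : U = Set.univ := by
        apply Set.eq_univ_of_forall
        intro z
        rwa [Subsingleton.elim z y]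
      have hmem : (Set.univ : Set Y) ∈ iterJoin T 𝒰 n := by
        refine ⟨fun _ => U, fun _ => hU𝒰, ?_⟩
        rw [hUuniv]
        simp
      apply Nat.sInf_le
      refine ⟨{Set.univ}, ?_, ?_, ?_⟩
      · simpa using hmem
      · simp
      · simp
    have hfun : (fun n : ℕ =>
        ((Real.log (coverNum (iterJoin T 𝒰 n)) / n : ℝ) : EReal)) = fun _ => (0 : EReal) := by
      funext n
      have h01 := Nat.le_one_iff_eq_zero_or_eq_one.mp (hnum n)
      rcases h01 with h | h <;> simp [h]
    rw [coverEntropy, hfun]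
    exact Filter.limsup_const 0
  have hcover : IsOpenCover ({Set.univ} : Set (Set Y)) := by
    constructor
    · intro U hU
      simp only [Set.mem_singleton_iff] at hU
      subst hU
      exact isOpen_univ
    · simp
  apply le_antisymm
  · apply iSup₂_le
    intro 𝒰 h𝒰
    exact le_of_eq (key 𝒰 h𝒰)
  · have : (0 : EReal) = coverEntropy T {Set.univ} := (key _ hcover).symm
    rw [this]
    exact le_iSup₂ (f := fun 𝒰 (_ : 𝒰 ∈ {𝒰 : Set (Set Y) | IsOpenCover 𝒰}) =>
      coverEntropy T 𝒰) ({Set.univ} : Set (Set Y)) hcover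

lemma orbitSet_const (c : ℂ) : orbitSet (fun _ : ℕ => c) = {fun _ => c} := by
  ext ω
  simp only [orbitSet, Set.mem_setOf_eq, Set.mem_singleton_iff]
  constructor
  · rintro ⟨n, hn⟩
    exact funext hn
  · rintro rfl
    exact ⟨0, fun k => rfl⟩

lemma AE_const (c : ℂ) : AE (fun _ : ℕ => c) = 0 := by
  have hset : orbitClosure (fun _ : ℕ => c) = {fun _ => c} := by
    rw [orbitClosure, orbitSet_const, closure_singleton]
  haveI : Subsingleton ↥(orbitClosure (fun _ : ℕ => c)) := by
    rw [hset]
    exact Set.subsingleton_singleton.coe_sort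
  haveI : Nonempty ↥(orbitClosure (fun _ : ℕ => c)) :=
    ⟨⟨_, subset_closure ⟨0, fun k => rfl⟩⟩⟩
  exact entropy_of_subsingleton _

end Anqie

namespace Anqie

/-- The evaluation character `ι(n) : f ↦ f(n)`, as a point of `E₀(ℕ)`. -/
noncomputable def evalChar (n : ℕ) : ↥CharSpace :=
  ⟨fun f => (f : BoundedContinuousFunction ℕ ℂ) n, by
    refine ⟨⟨⟨1, ?_⟩, ?_⟩, ?_, ?_, ?_⟩
    · rw [BoundedContinuousFunction.coe_one]
      exact AE_const 1
    · simp
    · rintro f g h hfg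
      show (h : BoundedContinuousFunction ℕ ℂ) n =
        (f : BoundedContinuousFunction ℕ ℂ) n + (g : BoundedContinuousFunction ℕ ℂ) n
      rw [hfg]; simp
    · rintro c f g hfg
      show (g : BoundedContinuousFunction ℕ ℂ) n = c * (f : BoundedContinuousFunction ℕ ℂ) n
      rw [hfg]; simp [smul_eq_mul]
    · rintro f g h hfg
      show (h : BoundedContinuousFunction ℕ ℂ) n =
        (f : BoundedContinuousFunction ℕ ℂ) n * (g : BoundedContinuousFunction ℕ ℂ) n
      rw [hfg]; simp⟩

end Anqie

namespace Anqie

/-- The shift `σ` on `l∞(ℕ)`: `(σ f)(n) = f (n+1)`. -/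
noncomputable def shiftBCF (f : BoundedContinuousFunction ℕ ℂ) : BoundedContinuousFunction ℕ ℂ :=
  f.compContinuous ⟨fun n => n + 1, continuous_of_discreteTopology⟩

end Anqie

namespace Anqie

open Filter Set Topology

section Entropy

variable {Y : Type*} {Z : Type*} [TopologicalSpace Y] [TopologicalSpace Z]

lemma log_nat_mono {a b : ℕ} (h : a ≤ b) : Real.log a ≤ Real.log b := by
  rcases Nat.eq_zero_or_pos a with rfl | ha
  · simpa using Real.log_natCast_nonneg b
  · exact Real.log_le_log (by exact_mod_cast ha) (by exact_mod_cast h)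

lemma univ_mem_iterJoin_univ (T : Y → Y) (n : ℕ) :
    (Set.univ : Set Y) ∈ iterJoin T {Set.univ} n := by
  refine ⟨fun _ => Set.univ, fun _ => rfl, by simp⟩

lemma coverNum_univ_le (T : Y → Y) (n : ℕ) : coverNum (iterJoin T {Set.univ} n) ≤ 1 := by
  apply Nat.sInf_le
  refine ⟨{Set.univ}, by simpa using univ_mem_iterJoin_univ T n, by simp, by simp⟩

lemma coverEntropy_univ (T : Y → Y) : coverEntropy T {Set.univ} = 0 := by
  have hfun : (fun n : ℕ =>
      ((Real.log (coverNum (iterJoin T {Set.univ} n)) / n : ℝ) : EReal)) = fun _ => (0 : EReal) := by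
    funext n
    rcases Nat.le_one_iff_eq_zero_or_eq_one.mp (coverNum_univ_le T n) with h | h <;> simp [h]
  rw [coverEntropy, hfun]
  exact Filter.limsup_const 0

lemma zero_le_entropy (T : Y → Y) : (0 : EReal) ≤ entropy T := by
  have hcover : IsOpenCover ({Set.univ} : Set (Set Y)) := by
    constructor
    · rintro U rfl; exact isOpen_univ
    · simp
  rw [← coverEntropy_univ T]
  exact le_iSup₂ (f := fun 𝒰 (_ : 𝒰 ∈ {𝒰 : Set (Set Y) | IsOpenCover 𝒰}) =>
      coverEntropy T 𝒰) ({Set.univ} : Set (Set Y)) hcover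

lemma entropy_le_of_factor [CompactSpace Y] {S : Y → Y} {R : Z → Z} (hS : Continuous S)
    {p : Y → Z} (hp : Continuous p) (hsurj : Function.Surjective p)
    (hsemi : ∀ y, p (S y) = R (p y)) : entropy R ≤ entropy S := by
  apply iSup₂_le
  intro 𝒱 h𝒱
  set 𝒰 : Set (Set Y) := (fun V => p ⁻¹' V) '' 𝒱 with h𝒰def
  have hsemi' : ∀ (j : ℕ) (V : Set Z), S^[j] ⁻¹' (p ⁻¹' V) = p ⁻¹' (R^[j] ⁻¹' V) := by
    intro j V
    have : Function.Semiconj p S R := hsemi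
    have h2 : p ∘ S^[j] = R^[j] ∘ p := (this.iterate_right j).comp_eq
    rw [← Set.preimage_comp, ← Set.preimage_comp, h2]
  have h𝒰 : IsOpenCover 𝒰 := by
    constructor
    · rintro U ⟨V, hV, rfl⟩
      exact (h𝒱.1 V hV).preimage hp
    · rw [h𝒰def, Set.sUnion_image, ← Set.preimage_iUnion₂]
      rw [← Set.sUnion_eq_biUnion, h𝒱.2, Set.preimage_univ]
  -- key: coverNum of the 𝒱-join is at most coverNum of the 𝒰-join
  have key : ∀ n : ℕ, coverNum (iterJoin R 𝒱 n) ≤ coverNum (iterJoin S 𝒰 n) := by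
    intro n
    -- the 𝒰-join is an open cover of Y
    have hjoin_open : ∀ W ∈ iterJoin S 𝒰 n, IsOpen W := by
      rintro W ⟨u, hu, rfl⟩
      exact isOpen_iInter_of_finite fun j =>
        ((h𝒰.1 _ (hu j)).preimage (hS.iterate _))
    have hjoin_cover : (Set.univ : Set Y) ⊆ ⋃ W ∈ iterJoin S 𝒰 n, W := by
      intro y _
      have : ∀ j : Fin n, ∃ U ∈ 𝒰, S^[(j:ℕ)] y ∈ U := by
        intro j
        have : S^[(j:ℕ)] y ∈ ⋃₀ 𝒰 := h𝒰.2 ▸ Set.mem_univ _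
        exact this
      choose u hu hyu using this
      refine Set.mem_biUnion ⟨u, hu, rfl⟩ ?_
      exact Set.mem_iInter.mpr fun j => hyu j
    obtain ⟨b', hb'sub, hb'fin, hb'cover⟩ :=
      isCompact_univ.elim_finite_subcover_image (fun W hW => hjoin_open W hW) hjoin_cover
    have hne : {k | ∃ F : Finset (Set Y), (↑F : Set (Set Y)) ⊆ iterJoin S 𝒰 n ∧
        ⋃₀ (↑F : Set (Set Y)) = Set.univ ∧ F.card = k}.Nonempty := by
      refine ⟨hb'fin.toFinset.card, hb'fin.toFinset, by simpa using hb'sub, ?_, rfl⟩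
      apply Set.eq_univ_of_univ_subset
      intro y hy
      have := hb'cover hy
      simp only [Set.Finite.coe_toFinset, Set.sUnion_eq_biUnion]
      exact this
    obtain ⟨F, hFsub, hFcover, hFcard⟩ := Nat.sInf_mem hne
    -- push F forward to a subcover of the 𝒱-join
    have hchoice : ∀ W ∈ F, ∃ W', W' ∈ iterJoin R 𝒱 n ∧ W = p ⁻¹' W' := by
      intro W hW
      obtain ⟨u, hu, rfl⟩ := hFsub hW
      choose v hv hpv using fun j => hu j
      refine ⟨⋂ j : Fin n, R^[(j:ℕ)] ⁻¹' v j, ⟨v, hv, rfl⟩, ?_⟩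
      rw [Set.preimage_iInter]
      refine Set.iInter_congr fun j => ?_
      rw [← hsemi', ← hpv j]
    classical
    let Φ : Set Y → Set Z := fun W =>
      if h : ∃ W', W' ∈ iterJoin R 𝒱 n ∧ W = p ⁻¹' W' then h.choose else ∅
    have hΦ : ∀ W ∈ F, Φ W ∈ iterJoin R 𝒱 n ∧ W = p ⁻¹' (Φ W) := by
      intro W hW
      have h := hchoice W hW
      simp only [Φ, dif_pos h]
      exact h.choose_spec
    calc coverNum (iterJoin R 𝒱 n)
        ≤ (F.image Φ).card := by
          apply Nat.sInf_le
          refine ⟨F.image Φ, ?_, ?_, rfl⟩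
          · intro W' hW'
            rw [Finset.coe_image] at hW'
            obtain ⟨W, hW, rfl⟩ := hW'
            exact (hΦ W hW).1
          · apply Set.eq_univ_of_forall
            intro z
            obtain ⟨y, rfl⟩ := hsurj z
            have hy : y ∈ ⋃₀ (↑F : Set (Set Y)) := hFcover ▸ Set.mem_univ y
            obtain ⟨W, hWF, hyW⟩ := hy
            refine ⟨Φ W, ?_, ?_⟩
            · rw [Finset.coe_image]; exact ⟨W, hWF, rfl⟩
            · have := (hΦ W hWF).2
              rw [this] at hyW
              exact hyW
      _ ≤ F.card := Finset.card_image_le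
      _ = coverNum (iterJoin S 𝒰 n) := hFcard
  refine le_trans ?_ (le_iSup₂ (f := fun 𝒰 (_ : 𝒰 ∈ {𝒰 : Set (Set Y) | IsOpenCover 𝒰}) =>
      coverEntropy S 𝒰) 𝒰 h𝒰)
  have hle : ∀ n : ℕ, ((Real.log (coverNum (iterJoin R 𝒱 n)) / n : ℝ) : EReal) ≤
      ((Real.log (coverNum (iterJoin S 𝒰 n)) / n : ℝ) : EReal) := by
    intro n
    apply EReal.coe_le_coe_iff.mpr
    rw [div_eq_mul_inv, div_eq_mul_inv]
    exact mul_le_mul_of_nonneg_right (log_nat_mono (key n)) (by positivity)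
  exact Filter.limsup_le_limsup (Filter.Eventually.of_forall hle)

end Entropy

end Anqie
namespace Anqie

open Filter Set Topology

section Orbit

lemma continuous_shiftOn (f : ℕ → ℂ) : Continuous (shiftOn f) := by
  apply Continuous.subtype_mk
  exact (continuous_pi fun k => (continuous_apply (k + 1))).comp continuous_subtype_val

lemma isCompact_orbitClosure (f : BoundedContinuousFunction ℕ ℂ) :
    IsCompact (orbitClosure ⇑f) := by
  have hsub : orbitSet ⇑f ⊆ Set.univ.pi (fun _ : ℕ => Metric.closedBall (0 : ℂ) ‖f‖) := by
    rintro ω ⟨n, hn⟩ k -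
    rw [hn k, Metric.mem_closedBall, dist_zero_right]
    exact f.norm_coe_le_norm (n + k)
  have hpi : IsCompact (Set.univ.pi fun _ : ℕ => Metric.closedBall (0 : ℂ) ‖f‖) :=
    isCompact_univ_pi fun _ => isCompact_closedBall _ _
  exact hpi.of_isClosed_subset isClosed_closure (closure_minimal hsub hpi.isClosed)

/-- The shifted function still has zero anqie entropy. -/
lemma AE_shiftBCF_le (f : BoundedContinuousFunction ℕ ℂ) :
    AE (fun n => f (n + 1)) ≤ AE ⇑f := by
  haveI : CompactSpace ↥(orbitClosure ⇑f) :=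
    isCompact_iff_compactSpace.mp (isCompact_orbitClosure f)
  set g : ℕ → ℂ := fun n => f (n + 1) with hg
  have hcont : Continuous fun ω : ℕ → ℂ => fun k => ω (k + 1) :=
    continuous_pi fun k => continuous_apply (k + 1)
  have hmaps : MapsTo (fun ω : ℕ → ℂ => fun k => ω (k + 1)) (orbitSet ⇑f) (orbitSet g) := by
    rintro ω ⟨n, hn⟩
    refine ⟨n, fun k => ?_⟩
    exact hn (k + 1)
  have hmem : ∀ ω : ↥(orbitClosure ⇑f), (fun k => (ω : ℕ → ℂ) (k + 1)) ∈ orbitClosure g :=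
    fun ω => map_mem_closure hcont ω.2 hmaps
  set p : ↥(orbitClosure ⇑f) → ↥(orbitClosure g) :=
    fun ω => ⟨fun k => (ω : ℕ → ℂ) (k + 1), hmem ω⟩ with hp
  have hpc : Continuous p := by
    apply Continuous.subtype_mk
    exact (continuous_pi fun k => (continuous_apply (k + 1))).comp continuous_subtype_val
  have hsurj : Function.Surjective p := by
    have himg : IsCompact ((fun ω : ℕ → ℂ => fun k => ω (k + 1)) '' orbitClosure ⇑f) :=
      (isCompact_orbitClosure f).image hcont
    have hsub2 : orbitSet g ⊆ (fun ω : ℕ → ℂ => fun k => ω (k + 1)) '' orbitClosure ⇑f := by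
      rintro ω ⟨n, hn⟩
      refine ⟨fun k => f (n + k), subset_closure ⟨n, fun k => rfl⟩, ?_⟩
      funext k
      exact (hn k).symm
    have hsub3 : orbitClosure g ⊆ (fun ω : ℕ → ℂ => fun k => ω (k + 1)) '' orbitClosure ⇑f :=
      closure_minimal hsub2 himg.isClosed
    rintro ⟨z, hz⟩
    obtain ⟨ω, hω, hωz⟩ := hsub3 hz
    exact ⟨⟨ω, hω⟩, Subtype.ext hωz⟩
  have hsemi : ∀ ω, p (shiftOn ⇑f ω) = shiftOn g (p ω) := by
    intro ω
    apply Subtype.ext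
    funext k
    rfl
  calc AE g = entropy (shiftOn g) := rfl
    _ ≤ entropy (shiftOn ⇑f) := entropy_le_of_factor (continuous_shiftOn ⇑f) hpc hsurj hsemi
    _ = AE ⇑f := rfl

end Orbit

end Anqie
namespace Anqie

open Filter Set Topology

section OrbitFun

variable {X : Type*} [TopologicalSpace X] [CompactSpace X] [T2Space X]

/-- The bounded function `n ↦ u (Tⁿ x₀)`. -/
noncomputable def fOrbB (T : X → X) (x0 : X) (u : C(X, ℂ)) : BoundedContinuousFunction ℕ ℂ :=
  (BoundedContinuousFunction.mkOfCompact u).compContinuous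
    ⟨fun n => T^[n] x0, continuous_of_discreteTopology⟩

lemma fOrbB_apply (T : X → X) (x0 : X) (u : C(X, ℂ)) (n : ℕ) :
    fOrbB T x0 u n = u (T^[n] x0) := rfl

lemma AE_fOrbB {T : X → X} (hT : Continuous T) (hent : entropy T = 0) {x0 : X}
    (hdense : Dense (Set.range fun n : ℕ => T^[n] x0)) (u : C(X, ℂ)) :
    AE ⇑(fOrbB T x0 u) = 0 := by
  set f : ℕ → ℂ := ⇑(fOrbB T x0 u) with hf
  have hfn : ∀ n, f n = u (T^[n] x0) := fun n => rfl
  set q : X → (ℕ → ℂ) := fun x => fun k => u (T^[k] x) with hq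
  have hqc : Continuous q := continuous_pi fun k => u.continuous.comp (hT.iterate k)
  have hiter : ∀ n k : ℕ, T^[k] (T^[n] x0) = T^[n + k] x0 := by
    intro n k
    rw [add_comm, Function.iterate_add_apply]
  have hmaps : MapsTo q (Set.range fun n : ℕ => T^[n] x0) (orbitSet f) := by
    rintro - ⟨n, rfl⟩
    exact ⟨n, fun k => congrArg u (hiter n k)⟩
  have hmem : ∀ x : X, q x ∈ orbitClosure f :=
    fun x => map_mem_closure hqc (hdense x) hmaps
  set p : X → ↥(orbitClosure f) := fun x => ⟨q x, hmem x⟩ with hp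
  have hpc : Continuous p := hqc.subtype_mk _
  have hsurj : Function.Surjective p := by
    have himg : IsCompact (Set.range q) := isCompact_range hqc
    have hsub2 : orbitSet f ⊆ Set.range q := by
      rintro ω ⟨n, hn⟩
      refine ⟨T^[n] x0, ?_⟩
      funext k
      rw [hn k, hfn (n + k)]
      exact congrArg u (hiter n k)
    have hsub3 : orbitClosure f ⊆ Set.range q := closure_minimal hsub2 himg.isClosed
    rintro ⟨z, hz⟩
    obtain ⟨x, hx⟩ := hsub3 hz
    exact ⟨x, Subtype.ext hx⟩
  have hsemi : ∀ x, p (T x) = shiftOn f (p x) := by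
    intro x
    apply Subtype.ext
    funext k
    exact congrArg u (Function.iterate_succ_apply T k x).symm
  refine le_antisymm ?_ (zero_le_entropy _)
  calc AE f = entropy (shiftOn f) := rfl
    _ ≤ entropy T := entropy_le_of_factor hT hpc hsurj hsemi
    _ = 0 := hent

end OrbitFun

section Char

/-- The unit of `E₀`, as an element of `E0sub`. -/
noncomputable def oneE : E0sub :=
  ⟨1, by rw [BoundedContinuousFunction.coe_one]; exact AE_const 1⟩

variable {φ : E0sub → ℂ}

lemma char_congr (hφ : φ ∈ CharSpace) {f g : E0sub}
    (h : (f : BoundedContinuousFunction ℕ ℂ) = g) : φ f = φ g := by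
  have := hφ.2.2.1 1 g f (by rw [one_smul]; exact h)
  rw [this, one_mul]

lemma char_one (hφ : φ ∈ CharSpace) : φ oneE = 1 := by
  obtain ⟨⟨f₀, hf₀⟩, -, -, hmul⟩ := hφ
  have h := hmul f₀ oneE f₀ (mul_one _).symm
  have h2 : φ f₀ * 1 = φ f₀ * φ oneE := by rw [mul_one]; exact h
  exact (mul_left_cancel₀ hf₀ h2).symm

end Char

section Ultra

lemma exists_ulim (F : Ultrafilter ℕ) (f : BoundedContinuousFunction ℕ ℂ) :
    ∃ c : ℂ, Filter.Tendsto ⇑f ↑F (𝓝 c) := by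
  have hc : IsCompact (Metric.closedBall (0 : ℂ) ‖f‖) := isCompact_closedBall _ _
  have hle : ↑(F.map ⇑f) ≤ Filter.principal (Metric.closedBall (0 : ℂ) ‖f‖) := by
    rw [Ultrafilter.coe_map, Filter.le_principal_iff, Filter.mem_map]
    apply Filter.univ_mem'
    intro n
    rw [Set.mem_preimage, Metric.mem_closedBall, dist_zero_right]
    exact f.norm_coe_le_norm n
  obtain ⟨c, -, hc2⟩ := hc.ultrafilter_le_nhds (F.map ⇑f) hle
  rw [Ultrafilter.coe_map] at hc2
  exact ⟨c, hc2⟩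

noncomputable def uval (F : Ultrafilter ℕ) (f : BoundedContinuousFunction ℕ ℂ) : ℂ :=
  (exists_ulim F f).choose

lemma uval_spec (F : Ultrafilter ℕ) (f : BoundedContinuousFunction ℕ ℂ) :
    Filter.Tendsto ⇑f ↑F (𝓝 (uval F f)) := (exists_ulim F f).choose_spec

/-- The character of `E₀` given by a limit along an ultrafilter on `ℕ`. -/
noncomputable def charUF (F : Ultrafilter ℕ) : ↥CharSpace := by
  refine ⟨fun f => uval F f.1, ⟨⟨oneE, ?_⟩, ?_, ?_, ?_⟩⟩
  · have h1 : Filter.Tendsto ⇑((oneE : E0sub).1) ↑F (𝓝 1) := by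
      have : ⇑((oneE : E0sub).1) = fun _ : ℕ => (1 : ℂ) := by
        funext n; rfl
      rw [this]
      exact tendsto_const_nhds
    show uval F (oneE).1 ≠ 0
    rw [tendsto_nhds_unique (uval_spec F _) h1]
    exact one_ne_zero
  · rintro f g h hcoe
    have hc : ⇑(h : BoundedContinuousFunction ℕ ℂ) =
        fun n => (f : BoundedContinuousFunction ℕ ℂ) n + (g : BoundedContinuousFunction ℕ ℂ) n := by
      rw [hcoe]; rfl
    have h1 : Filter.Tendsto ⇑(h : BoundedContinuousFunction ℕ ℂ) ↑F
        (𝓝 (uval F f.1 + uval F g.1)) := by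
      rw [hc]
      exact (uval_spec F f.1).add (uval_spec F g.1)
    exact tendsto_nhds_unique (uval_spec F _) h1
  · rintro c f g hcoe
    have hc : ⇑(g : BoundedContinuousFunction ℕ ℂ) =
        fun n => c * (f : BoundedContinuousFunction ℕ ℂ) n := by
      rw [hcoe]; rfl
    have h1 : Filter.Tendsto ⇑(g : BoundedContinuousFunction ℕ ℂ) ↑F (𝓝 (c * uval F f.1)) := by
      rw [hc]
      exact (uval_spec F f.1).const_mul c
    exact tendsto_nhds_unique (uval_spec F _) h1
  · rintro f g h hcoe
    have hc : ⇑(h : BoundedContinuousFunction ℕ ℂ) =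
        fun n => (f : BoundedContinuousFunction ℕ ℂ) n * (g : BoundedContinuousFunction ℕ ℂ) n := by
      rw [hcoe]; rfl
    have h1 : Filter.Tendsto ⇑(h : BoundedContinuousFunction ℕ ℂ) ↑F
        (𝓝 (uval F f.1 * uval F g.1)) := by
      rw [hc]
      exact (uval_spec F f.1).mul (uval_spec F g.1)
    exact tendsto_nhds_unique (uval_spec F _) h1

lemma exists_ultrafilter_tendsto {X : Type*} [TopologicalSpace X] (g : ℕ → X) {x : X}
    (hx : x ∈ closure (Set.range g)) : ∃ F : Ultrafilter ℕ, Filter.Tendsto g ↑F (𝓝 x) := by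
  have hne : (Filter.comap g (𝓝 x)).NeBot := by
    rw [Filter.comap_neBot_iff]
    intro t ht
    obtain ⟨y, hyt, n, rfl⟩ := mem_closure_iff_nhds.mp hx t ht
    exact ⟨n, hyt⟩
  exact ⟨Ultrafilter.of (Filter.comap g (𝓝 x)),
    Filter.map_le_iff_le_comap.mpr (Ultrafilter.of_le _)⟩

end Ultra

section Sep

lemma sep_points {X : Type*} [TopologicalSpace X] [CompactSpace X] [T2Space X] {x y : X}
    (h : ∀ u : C(X, ℂ), u x = u y) : x = y := by
  by_contra hne
  obtain ⟨u, hux, huy, -⟩ := exists_continuous_zero_one_of_isClosed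
    (isClosed_singleton (x := x)) (isClosed_singleton (x := y))
    (Set.disjoint_singleton.mpr hne)
  have hx : u x = 0 := hux rfl
  have hy : u y = 1 := huy rfl
  have := h ⟨fun z => ((u z : ℝ) : ℂ), Complex.continuous_ofReal.comp u.continuous⟩
  simp only [ContinuousMap.coe_mk, hx, hy] at this
  norm_num at this

end Sep

end Anqie
namespace Anqie

open Filter Set Topology

section Point

variable {X : Type*} [TopologicalSpace X] [CompactSpace X] [T2Space X]
variable {T : X → X} {x0 : X}

/-- The element of `E₀` given by `n ↦ u (Tⁿ x₀)`. -/
noncomputable def eltOrb (hT : Continuous T) (hent : entropy T = 0)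
    (hdense : Dense (Set.range fun n : ℕ => T^[n] x0)) (u : C(X, ℂ)) : E0sub :=
  ⟨fOrbB T x0 u, AE_fOrbB hT hent hdense u⟩

lemma exists_point (hT : Continuous T) (hent : entropy T = 0)
    (hdense : Dense (Set.range fun n : ℕ => T^[n] x0)) (ω : ↥CharSpace) :
    ∃ x : X, ∀ u : C(X, ℂ), u x = ω.1 (eltOrb hT hent hdense u) := by
  classical
  set χ : C(X, ℂ) → ℂ := fun u => ω.1 (eltOrb hT hent hdense u) with hχ
  have hω := ω.2
  have χadd : ∀ u v : C(X, ℂ), χ (u + v) = χ u + χ v := by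
    intro u v
    refine hω.2.1 (eltOrb hT hent hdense u) (eltOrb hT hent hdense v)
      (eltOrb hT hent hdense (u + v)) ?_
    ext n
    simp [eltOrb, fOrbB_apply]
  have χsmul : ∀ (c : ℂ) (u : C(X, ℂ)), χ (c • u) = c * χ u := by
    intro c u
    refine hω.2.2.1 c (eltOrb hT hent hdense u) (eltOrb hT hent hdense (c • u)) ?_
    ext n
    simp [eltOrb, fOrbB_apply]
  have χmul : ∀ u v : C(X, ℂ), χ (u * v) = χ u * χ v := by
    intro u v
    refine hω.2.2.2 (eltOrb hT hent hdense u) (eltOrb hT hent hdense v)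
      (eltOrb hT hent hdense (u * v)) ?_
    ext n
    simp [eltOrb, fOrbB_apply]
  have χone : χ 1 = 1 := by
    have h1 : χ 1 = ω.1 oneE := by
      refine char_congr hω ?_
      ext n
      simp [eltOrb, fOrbB_apply, oneE]
    rw [h1, char_one hω]
  have χzero : χ 0 = 0 := by
    have h0 : χ 0 = (0 : ℂ) * χ 0 :=
      hω.2.2.1 0 (eltOrb hT hent hdense 0) (eltOrb hT hent hdense 0) (by ext n; simp [eltOrb, fOrbB_apply])
    rw [h0, zero_mul]
  have χsum : ∀ (t : Finset C(X, ℂ)) (G : C(X, ℂ) → C(X, ℂ)),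
      χ (∑ u ∈ t, G u) = ∑ u ∈ t, χ (G u) := by
    intro t G
    induction t using Finset.induction_on with
    | empty => simpa using χzero
    | insert _ _ hnot ih =>
      rw [Finset.sum_insert hnot, Finset.sum_insert hnot, χadd, ih]
  rcases Set.eq_empty_or_nonempty (⋂ u : C(X, ℂ), {x | u x = χ u}) with hint | ⟨x, hx⟩
  swap
  · exact ⟨x, fun u => Set.mem_iInter.mp hx u⟩
  exfalso
  obtain ⟨t, ht⟩ := isCompact_univ.elim_finite_subfamily_closed
    (fun u : C(X, ℂ) => {x | u x = χ u})
    (fun u => isClosed_eq u.continuous continuous_const)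
    (by rw [Set.univ_inter]; exact hint)
  set d : C(X, ℂ) → C(X, ℂ) := fun u => u + (-(χ u)) • 1 with hd
  have hχd : ∀ u, χ (d u) = 0 := by
    intro u
    rw [hd]
    simp only
    rw [χadd, χsmul, χone]
    ring
  set w : C(X, ℂ) := ∑ u ∈ t, d u * star (d u) with hw
  have hχw : χ w = 0 := by
    rw [hw, χsum]
    exact Finset.sum_eq_zero fun u _ => by rw [χmul, hχd, zero_mul]
  have hwx : ∀ x : X, w x ≠ 0 := by
    intro x
    have hxnot : ∃ u ∈ t, u x ≠ χ u := by
      have hx' := Set.eq_empty_iff_forall_notMem.mp ht x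
      simpa using hx'
    obtain ⟨u₀, hu₀t, hu₀⟩ := hxnot
    have hwx2 : w x = ((∑ u ∈ t, Complex.normSq (d u x) : ℝ) : ℂ) := by
      rw [hw]
      push_cast
      rw [ContinuousMap.coe_sum, Finset.sum_apply]
      refine Finset.sum_congr rfl fun u _ => ?_
      rw [ContinuousMap.mul_apply, ContinuousMap.star_apply]
      exact Complex.mul_conj (d u x)
    rw [hwx2]
    have hpos : 0 < ∑ u ∈ t, Complex.normSq (d u x) := by
      refine Finset.sum_pos' (fun u _ => Complex.normSq_nonneg _) ⟨u₀, hu₀t, ?_⟩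
      refine Complex.normSq_pos.mpr ?_
      have : d u₀ x = u₀ x - χ u₀ := by
        simp [hd, sub_eq_add_neg]
      rw [this]
      exact sub_ne_zero.mpr hu₀
    exact_mod_cast ne_of_gt hpos
  set v : C(X, ℂ) := ⟨fun x => (w x)⁻¹, w.continuous.inv₀ hwx⟩ with hv
  have h2 : w * v = 1 := by
    ext x
    exact mul_inv_cancel₀ (hwx x)
  have h3 : χ (w * v) = χ w * χ v := χmul w v
  rw [h2, χone, hχw, zero_mul] at h3
  exact one_ne_zero h3

end Point

end Anqie
namespace Anqie

lemma AE_shiftBCF_zero (f : BoundedContinuousFunction ℕ ℂ) (hf : AE ⇑f = 0) :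
    AE ⇑(shiftBCF f) = 0 := by
  have hcoe : ⇑(shiftBCF f) = fun n => f (n + 1) := rfl
  rw [hcoe]
  exact le_antisymm ((AE_shiftBCF_le f).trans_eq hf) (zero_le_entropy _)

/-- The shift on `E₀`, as a map on `E0sub`. -/
noncomputable def shiftElt (f : E0sub) : E0sub :=
  ⟨shiftBCF f.1, AE_shiftBCF_zero f.1 f.2⟩

end Anqie

/-- Let `X` be a compact Hausdorff space, `T : X → X` continuous
with AKM topological entropy `0`, and `x₀ ∈ X` with dense forward orbit. Then
(with `A : E₀(ℕ) → E₀(ℕ)` the continuous map `ω ↦ ω ∘ σ` induced by the shift),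
there is a continuous surjection `π : E₀(ℕ) → X` with `π ∘ A = T ∘ π` and
`π(ι(0)) = x₀`. -/
theorem zero_entropy_transitive_system_is_factor_of_E0 {X : Type*} [TopologicalSpace X]
    [CompactSpace X] [T2Space X] (T : X → X) (hT : Continuous T)
    (hent : Anqie.entropy T = 0) (x0 : X)
    (hdense : Dense (Set.range fun n : ℕ => T^[n] x0)) :
    ∃ A : ↥Anqie.CharSpace → ↥Anqie.CharSpace, Continuous A ∧
      (∀ (ω : ↥Anqie.CharSpace) (f g : Anqie.E0sub),
        (g : BoundedContinuousFunction ℕ ℂ) =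
          Anqie.shiftBCF (f : BoundedContinuousFunction ℕ ℂ) →
        (A ω).1 f = ω.1 g) ∧
      ∃ π : ↥Anqie.CharSpace → X, Continuous π ∧ Function.Surjective π ∧
        π ∘ A = T ∘ π ∧ π (Anqie.evalChar 0) = x0 := by
  classical
  open Anqie in
  -- the induced shift `A` on the character space
  have hAmem : ∀ ω : ↥CharSpace, (fun f : E0sub => ω.1 (shiftElt f)) ∈ CharSpace := by
    intro ω
    refine ⟨⟨oneE, ?_⟩, ?_, ?_, ?_⟩
    · have h1 : ω.1 (shiftElt oneE) = ω.1 oneE := by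
        refine char_congr ω.2 ?_
        ext n
        rfl
      show ω.1 (shiftElt oneE) ≠ 0
      rw [h1, char_one ω.2]
      exact one_ne_zero
    · rintro a b c hcoe
      refine ω.2.2.1 (shiftElt a) (shiftElt b) (shiftElt c) ?_
      ext n
      show (c : BoundedContinuousFunction ℕ ℂ) (n + 1) = _
      rw [hcoe]
      rfl
    · rintro r a b hcoe
      refine ω.2.2.2.1 r (shiftElt a) (shiftElt b) ?_
      ext n
      show (b : BoundedContinuousFunction ℕ ℂ) (n + 1) = _
      rw [hcoe]
      rfl
    · rintro a b c hcoe
      refine ω.2.2.2.2 (shiftElt a) (shiftElt b) (shiftElt c) ?_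
      ext n
      show (c : BoundedContinuousFunction ℕ ℂ) (n + 1) = _
      rw [hcoe]
      rfl
  set A : ↥CharSpace → ↥CharSpace := fun ω => ⟨fun f => ω.1 (shiftElt f), hAmem ω⟩ with hA
  have hAcont : Continuous A := by
    apply Continuous.subtype_mk
    exact continuous_pi fun f => (continuous_apply (shiftElt f)).comp continuous_subtype_val
  have hAeq : ∀ (ω : ↥CharSpace) (f g : E0sub),
      (g : BoundedContinuousFunction ℕ ℂ) = shiftBCF (f : BoundedContinuousFunction ℕ ℂ) →
      (A ω).1 f = ω.1 g := by
    intro ω f g hg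
    exact char_congr ω.2 (show ((shiftElt f : E0sub) : BoundedContinuousFunction ℕ ℂ) = g
      from hg.symm)
  refine ⟨A, hAcont, hAeq, ?_⟩
  -- the factor map π
  choose π hπ using fun ω : ↥CharSpace => exists_point hT hent hdense ω
  have hsep : ∀ {x y : X}, (∀ u : C(X, ℂ), u x = u y) → x = y := fun h => sep_points h
  refine ⟨π, ?_, ?_, ?_, ?_⟩
  · -- continuity
    set e : X → (C(X, ℂ) → ℂ) := fun x u => u x with he
    have hec : Continuous e := continuous_pi fun u => u.continuous
    have hei : Function.Injective e := by
      intro x y hxy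
      exact hsep fun u => congrFun hxy u
    have hemb := hec.isClosedEmbedding hei
    rw [hemb.isEmbedding.continuous_iff]
    have heπ : e ∘ π = fun ω : ↥CharSpace => fun u : C(X, ℂ) =>
        ω.1 (eltOrb hT hent hdense u) := by
      funext ω u
      exact hπ ω u
    rw [heπ]
    exact continuous_pi fun u => (continuous_apply _).comp continuous_subtype_val
  · -- surjectivity
    intro x
    obtain ⟨F, hF⟩ := exists_ultrafilter_tendsto (fun n : ℕ => T^[n] x0) (hdense x)
    refine ⟨charUF F, hsep fun u => ?_⟩
    rw [hπ (charUF F) u]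
    have h1 : Filter.Tendsto ⇑(fOrbB T x0 u) ↑F (𝓝 (u x)) := by
      have : ⇑(fOrbB T x0 u) = u ∘ (fun n : ℕ => T^[n] x0) := rfl
      rw [this]
      exact (u.continuous.tendsto x).comp hF
    exact tendsto_nhds_unique (uval_spec F (fOrbB T x0 u)) h1
  · -- semiconjugacy
    funext ω
    refine hsep fun u => ?_
    have h1 : u (π (A ω)) = (A ω).1 (eltOrb hT hent hdense u) := hπ (A ω) u
    have h2 : (A ω).1 (eltOrb hT hent hdense u) =
        ω.1 (eltOrb hT hent hdense (u.comp ⟨T, hT⟩)) := by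
      show ω.1 (shiftElt (eltOrb hT hent hdense u)) = _
      refine char_congr ω.2 ?_
      ext n
      show u (T^[n + 1] x0) = u (T (T^[n] x0))
      rw [Function.iterate_succ_apply']
    have h3 : ω.1 (eltOrb hT hent hdense (u.comp ⟨T, hT⟩)) = u (T (π ω)) :=
      (hπ ω (u.comp ⟨T, hT⟩)).symm
    show u (π (A ω)) = u (T (π ω))
    rw [h1, h2, h3]
  · -- base point
    refine hsep fun u => ?_
    rw [hπ (evalChar 0) u]
    rfl
end

section
/- For every infinite subset R ⊆ ℕ, the closure of {ι(n) : n ∈ R} in E₀(ℕ) is uncountable. Consequently, E₀(ℕ) is not metrizable. -/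
open Filter Set Topology

namespace AnqieAux
open Anqie Filter Set Topology

/-! ### Basic facts about the shift and orbit closure -/

lemma iterate_shiftOn (f : ℕ → ℂ) : ∀ (j : ℕ) (y : ↥(orbitClosure f)) (i : ℕ),
    (((shiftOn f)^[j] y : ℕ → ℂ)) i = (y : ℕ → ℂ) (i + j) := by
  intro j
  induction j with
  | zero => intro y i; simp
  | succ j ih =>
    intro y i
    rw [Function.iterate_succ_apply, ih]
    rfl

/-- The orbit point at time `m`, as an element of the orbit closure. -/
def orbitPt (f : ℕ → ℂ) (m : ℕ) : ↥(orbitClosure f) :=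
  ⟨fun k => f (m + k), subset_closure ⟨m, fun _ => rfl⟩⟩

lemma orbitPt_coe (f : ℕ → ℂ) (m i : ℕ) : ((orbitPt f m : ℕ → ℂ)) i = f (m + i) := rfl

lemma isCompact_orbitClosure (f : ℕ → ℂ) (hf : ∀ n, ‖f n‖ ≤ 1) :
    IsCompact (orbitClosure f) := by
  have hsub : orbitSet f ⊆ Set.pi Set.univ (fun _ : ℕ => Metric.closedBall (0 : ℂ) 1) := by
    rintro ω ⟨n, hn⟩ i -
    rw [Metric.mem_closedBall, dist_zero_right, hn i]
    exact hf _
  have hcl : IsClosed (Set.pi Set.univ (fun _ : ℕ => Metric.closedBall (0 : ℂ) 1)) :=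
    isClosed_set_pi fun a _ => Metric.isClosed_closedBall
  have hcp : IsCompact (Set.pi Set.univ (fun _ : ℕ => Metric.closedBall (0 : ℂ) 1)) :=
    isCompact_univ_pi fun _ => isCompact_closedBall _ _
  exact hcp.of_isClosed_subset isClosed_closure (closure_minimal hsub hcl)

lemma isOpenCover_univ {Y : Type*} [TopologicalSpace Y] :
    IsOpenCover ({Set.univ} : Set (Set Y)) := by
  constructor
  · intro U hU
    simp only [Set.mem_singleton_iff] at hU
    subst hU
    exact isOpen_univ
  · simp

lemma coverEntropy_univ_cover {Y : Type*} [TopologicalSpace Y] (T : Y → Y) :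
    coverEntropy T ({Set.univ} : Set (Set Y)) = 0 := by
  have hnum : ∀ n : ℕ, coverNum (iterJoin T ({Set.univ} : Set (Set Y)) n) ≤ 1 := by
    intro n
    have hmem : (Set.univ : Set Y) ∈ iterJoin T ({Set.univ} : Set (Set Y)) n :=
      ⟨fun _ => Set.univ, fun _ => rfl, by simp⟩
    apply Nat.sInf_le
    exact ⟨{Set.univ}, by simpa using hmem, by simp, by simp⟩
  have hfun : (fun n : ℕ =>
      ((Real.log (coverNum (iterJoin T ({Set.univ} : Set (Set Y)) n)) / n : ℝ) : EReal)) =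
      fun _ => (0 : EReal) := by
    funext n
    rcases Nat.le_one_iff_eq_zero_or_eq_one.mp (hnum n) with h | h <;> simp [h]
  rw [coverEntropy, hfun]
  exact Filter.limsup_const 0

/-! ### Open cylinders -/

lemma isOpen_cylinder (c : ℕ → ℂ) (N : ℕ) (δ : ℝ) :
    IsOpen {z : ℕ → ℂ | ∀ i < N, dist (z i) (c i) < δ} := by
  have heq : {z : ℕ → ℂ | ∀ i < N, dist (z i) (c i) < δ} =
      ⋂ i ∈ Finset.range N, (fun z : ℕ → ℂ => z i) ⁻¹' Metric.ball (c i) δ := by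
    ext z
    simp [Metric.mem_ball, Finset.mem_range]
  rw [heq]
  exact isOpen_biInter_finset fun i _ => Metric.isOpen_ball.preimage (continuous_apply i)

/-! ### A Lebesgue-number style lemma for covers of the orbit closure -/

lemma lebesgue (f : ℕ → ℂ) [CompactSpace ↥(orbitClosure f)] [Nonempty ↥(orbitClosure f)]
    (𝒰 : Set (Set ↥(orbitClosure f))) (h𝒰 : IsOpenCover 𝒰) :
    ∃ (L : ℕ) (ε : ℝ), 0 < ε ∧ ∀ x : ↥(orbitClosure f), ∃ U ∈ 𝒰,
      ∀ y : ↥(orbitClosure f), (∀ i < L, dist ((y : ℕ → ℂ) i) ((x : ℕ → ℂ) i) < ε) → y ∈ U := by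
  classical
  -- step 1: at each point a cylinder inside a member of the cover
  have step1 : ∀ x : ↥(orbitClosure f), ∃ U ∈ 𝒰, ∃ (L : ℕ) (δ : ℝ), 0 < δ ∧
      ∀ y : ↥(orbitClosure f), (∀ i < L, dist ((y : ℕ → ℂ) i) ((x : ℕ → ℂ) i) < δ) → y ∈ U := by
    intro x
    have hx : x ∈ ⋃₀ 𝒰 := by rw [h𝒰.2]; trivial
    obtain ⟨U, hU𝒰, hxU⟩ := hx
    obtain ⟨V, hV, hVU⟩ := isOpen_induced_iff.mp (h𝒰.1 U hU𝒰)
    have hxV : (x : ℕ → ℂ) ∈ V := by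
      rw [← hVU] at hxU; exact hxU
    obtain ⟨I, u, hu, hIV⟩ := isOpen_pi_iff.mp hV _ hxV
    have hδ : ∀ a : ℕ, ∃ δ : ℝ, 0 < δ ∧ (a ∈ I → Metric.ball ((x : ℕ → ℂ) a) δ ⊆ u a) := by
      intro a
      by_cases ha : a ∈ I
      · obtain ⟨δ, hδpos, hδ⟩ := Metric.isOpen_iff.mp (hu a ha).1 _ (hu a ha).2
        exact ⟨δ, hδpos, fun _ => hδ⟩
      · exact ⟨1, one_pos, fun h => absurd h ha⟩
    choose d hd0 hdball using hδ
    have hne : (insert 0 I).Nonempty := ⟨0, Finset.mem_insert_self _ _⟩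
    refine ⟨U, hU𝒰, (I.sup id) + 1, (insert 0 I).inf' hne d, ?_, ?_⟩
    · rw [Finset.lt_inf'_iff]
      exact fun a _ => hd0 a
    · intro y hy
      rw [← hVU]
      refine hIV ?_
      intro a ha
      apply hdball a ha
      rw [Metric.mem_ball]
      have haL : a < I.sup id + 1 := Nat.lt_succ_of_le (Finset.le_sup (f := id) ha)
      exact lt_of_lt_of_le (hy a haL) (Finset.inf'_le d (Finset.mem_insert_of_mem ha))
  choose Usel hUsel Lsel dsel hdsel hball using step1
  -- step 2: compactness
  set W : ↥(orbitClosure f) → Set ↥(orbitClosure f) :=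
    fun x => {y | ∀ i < Lsel x, dist ((y : ℕ → ℂ) i) ((x : ℕ → ℂ) i) < dsel x / 2}
  have hWopen : ∀ x, IsOpen (W x) := by
    intro x
    have : W x = Subtype.val ⁻¹' {z : ℕ → ℂ | ∀ i < Lsel x, dist (z i) ((x : ℕ → ℂ) i) < dsel x / 2} := rfl
    rw [this]
    exact (isOpen_cylinder _ _ _).preimage continuous_subtype_val
  have hWcov : (Set.univ : Set ↥(orbitClosure f)) ⊆ ⋃ x, W x := by
    intro y _
    exact Set.mem_iUnion.mpr ⟨y, fun i _ => by rw [dist_self]; exact half_pos (hdsel y)⟩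
  obtain ⟨F, hF⟩ := isCompact_univ.elim_finite_subcover W hWopen hWcov
  have hFne : F.Nonempty := by
    obtain ⟨y⟩ := ‹Nonempty ↥(orbitClosure f)›
    obtain ⟨x, hx, hyx⟩ := Set.mem_iUnion₂.mp (hF (Set.mem_univ y))
    exact ⟨x, hx⟩
  refine ⟨F.sup Lsel, F.inf' hFne (fun x => dsel x / 2), ?_, ?_⟩
  · rw [Finset.lt_inf'_iff]
    exact fun x _ => half_pos (hdsel x)
  · intro y
    obtain ⟨x, hxF, hyx⟩ := Set.mem_iUnion₂.mp (hF (Set.mem_univ y))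
    refine ⟨Usel x, hUsel x, fun z hz => ?_⟩
    apply hball x
    intro i hi
    have hiL : i < F.sup Lsel := lt_of_lt_of_le hi (Finset.le_sup hxF)
    calc dist ((z : ℕ → ℂ) i) ((x : ℕ → ℂ) i)
        ≤ dist ((z : ℕ → ℂ) i) ((y : ℕ → ℂ) i) + dist ((y : ℕ → ℂ) i) ((x : ℕ → ℂ) i) :=
          dist_triangle _ _ _
      _ < dsel x / 2 + dsel x / 2 := by
          refine add_lt_add (lt_of_lt_of_le (hz i hiL) ?_) (hyx i hi)
          exact Finset.inf'_le _ hxF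
      _ = dsel x := by ring

end AnqieAux
namespace AnqieAux
open Anqie Filter Set Topology

lemma tendsto_log_shift_div (a : ℝ) (ha : 0 < a) :
    Tendsto (fun n : ℕ => Real.log ((n : ℝ) + a) / n) atTop (𝓝 0) := by
  have h1 : Tendsto (fun x : ℝ => Real.log x / x) atTop (𝓝 0) :=
    Real.isLittleO_log_id_atTop.tendsto_div_nhds_zero
  have h2 : Tendsto (fun n : ℕ => (n : ℝ) + a) atTop atTop :=
    tendsto_atTop_add_const_right _ a tendsto_natCast_atTop_atTop
  have h3 : Tendsto (fun n : ℕ => Real.log ((n : ℝ) + a) / ((n : ℝ) + a)) atTop (𝓝 0) :=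
    h1.comp h2
  have h4 : Tendsto (fun n : ℕ => ((n : ℝ) + a) / n) atTop (𝓝 1) := by
    have h5 : Tendsto (fun n : ℕ => 1 + a / n) atTop (𝓝 1) := by
      have := (tendsto_const_div_atTop_nhds_zero_nat a).const_add 1
      simpa using this
    apply h5.congr'
    filter_upwards [eventually_ne_atTop 0] with n hn
    have : (n : ℝ) ≠ 0 := Nat.cast_ne_zero.mpr hn
    field_simp
  have h6 := h3.mul h4
  rw [mul_one] at h6
  apply h6.congr'
  filter_upwards [eventually_ne_atTop 0] with n hn
  have hn' : (n : ℝ) ≠ 0 := Nat.cast_ne_zero.mpr hn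
  have hna : (n : ℝ) + a ≠ 0 := by positivity
  field_simp

lemma AE_eq_zero_of_span (f : ℕ → ℂ) (hf : ∀ n, ‖f n‖ ≤ 1)
    (H : ∀ ε : ℝ, 0 < ε → ∃ C : ℕ, 0 < C ∧ ∀ N : ℕ, ∃ M : Finset ℕ,
      M.card ≤ C * (N + 1) ^ 2 ∧
      ∀ m : ℕ, ∃ m' ∈ M, ∀ i < N, dist (f (m + i)) (f (m' + i)) < ε) :
    AE f = 0 := by
  classical
  haveI : CompactSpace ↥(orbitClosure f) :=
    isCompact_iff_compactSpace.mp (isCompact_orbitClosure f hf)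
  haveI : Nonempty ↥(orbitClosure f) := ⟨orbitPt f 0⟩
  set T := shiftOn f with hT
  have key : ∀ 𝒰 : Set (Set ↥(orbitClosure f)), IsOpenCover 𝒰 → coverEntropy T 𝒰 = 0 := by
    intro 𝒰 h𝒰
    obtain ⟨L, ε, hε, hLeb⟩ := lebesgue f 𝒰 h𝒰
    obtain ⟨C, hC, hM⟩ := H (ε / 2) (by positivity)
    choose Usel hU𝒰 hUsub using fun q : ℕ => hLeb (orbitPt f q)
    have hcov : ∀ n : ℕ, coverNum (iterJoin T 𝒰 n) ≤ C * (n + L + 1) ^ 2 := by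
      intro n
      obtain ⟨M, hMcard, hMspan⟩ := hM (n + L)
      set V : ℕ → Set ↥(orbitClosure f) :=
        fun m' => ⋂ j : Fin n, T^[(j : ℕ)] ⁻¹' Usel (m' + (j : ℕ)) with hV
      have hVmem : ∀ m', V m' ∈ iterJoin T 𝒰 n := fun m' =>
        ⟨fun j => Usel (m' + (j : ℕ)), fun j => hU𝒰 _, rfl⟩
      have hVcov : ∀ y : ↥(orbitClosure f), ∃ m' ∈ M, y ∈ V m' := by
        intro y
        obtain ⟨m, hm⟩ : ∃ m : ℕ, ∀ i < n + L, dist (f (m + i)) ((y : ℕ → ℂ) i) < ε / 2 := by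
          have hyc : (y : ℕ → ℂ) ∈ closure (orbitSet f) := y.2
          have hO : IsOpen {z : ℕ → ℂ | ∀ i < n + L, dist (z i) ((y : ℕ → ℂ) i) < ε / 2} :=
            isOpen_cylinder _ _ _
          have hyO : (y : ℕ → ℂ) ∈ {z : ℕ → ℂ | ∀ i < n + L, dist (z i) ((y : ℕ → ℂ) i) < ε / 2} :=
            fun i _ => by rw [dist_self]; positivity
          obtain ⟨z, hzO, hzOrb⟩ := mem_closure_iff.mp hyc _ hO hyO
          obtain ⟨m, hmz⟩ := hzOrb
          exact ⟨m, fun i hi => by rw [← hmz i]; exact hzO i hi⟩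
        obtain ⟨m', hm'M, hm'span⟩ := hMspan m
        have hy : ∀ i < n + L, dist ((y : ℕ → ℂ) i) (f (m' + i)) < ε := by
          intro i hi
          calc dist ((y : ℕ → ℂ) i) (f (m' + i))
              ≤ dist ((y : ℕ → ℂ) i) (f (m + i)) + dist (f (m + i)) (f (m' + i)) :=
                dist_triangle _ _ _
            _ < ε / 2 + ε / 2 := add_lt_add (by rw [dist_comm]; exact hm i hi) (hm'span i hi)
            _ = ε := by ring
        refine ⟨m', hm'M, Set.mem_iInter.mpr fun j => ?_⟩
        show T^[(j : ℕ)] y ∈ Usel (m' + (j : ℕ))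
        apply hUsub (m' + (j : ℕ))
        intro i hi
        rw [iterate_shiftOn, orbitPt_coe]
        have harr : (m' + (j : ℕ)) + i = m' + (i + (j : ℕ)) := by omega
        rw [harr]
        exact hy (i + (j : ℕ)) (by omega)
      have hsub : (↑(M.image V) : Set (Set ↥(orbitClosure f))) ⊆ iterJoin T 𝒰 n := by
        intro W hW
        simp only [Finset.coe_image, Set.mem_image, Finset.mem_coe] at hW
        obtain ⟨m', _, rfl⟩ := hW
        exact hVmem m'
      have huniv : ⋃₀ (↑(M.image V) : Set (Set ↥(orbitClosure f))) = Set.univ := by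
        apply Set.eq_univ_of_forall
        intro y
        obtain ⟨m', hm'M, hy⟩ := hVcov y
        refine ⟨V m', ?_, hy⟩
        simp only [Finset.coe_image, Set.mem_image, Finset.mem_coe]
        exact ⟨m', hm'M, rfl⟩
      calc coverNum (iterJoin T 𝒰 n) ≤ (M.image V).card :=
            Nat.sInf_le ⟨M.image V, hsub, huniv, rfl⟩
        _ ≤ M.card := Finset.card_image_le
        _ ≤ C * (n + L + 1) ^ 2 := by
            have : n + L + 1 = (n + L) + 1 := rfl
            rw [this]; exact hMcard
    -- now the limsup computation
    have h0 : ∀ n : ℕ, (0 : ℝ) ≤ Real.log (coverNum (iterJoin T 𝒰 n)) / n := by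
      intro n
      apply div_nonneg _ (Nat.cast_nonneg n)
      rcases Nat.eq_zero_or_pos (coverNum (iterJoin T 𝒰 n)) with h | h
      · simp [h]
      · exact Real.log_nonneg (by exact_mod_cast h)
    have hub : ∀ n : ℕ, Real.log (coverNum (iterJoin T 𝒰 n)) / n ≤
        Real.log ((C : ℝ) * ((n : ℝ) + L + 1) ^ 2) / n := by
      intro n
      have hpos : (1 : ℝ) ≤ (C : ℝ) * ((n : ℝ) + L + 1) ^ 2 := by
        have h1 : (1 : ℝ) ≤ (C : ℝ) := by exact_mod_cast hC
        have h2 : (1 : ℝ) ≤ ((n : ℝ) + L + 1) := by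
          have := Nat.cast_nonneg (α := ℝ) n
          have := Nat.cast_nonneg (α := ℝ) L
          linarith
        nlinarith
      have hlog : Real.log (coverNum (iterJoin T 𝒰 n)) ≤
          Real.log ((C : ℝ) * ((n : ℝ) + L + 1) ^ 2) := by
        rcases Nat.eq_zero_or_pos (coverNum (iterJoin T 𝒰 n)) with h | h
        · rw [h]; simpa using Real.log_nonneg hpos
        · apply Real.log_le_log (by exact_mod_cast h)
          calc ((coverNum (iterJoin T 𝒰 n) : ℝ)) ≤ ((C * (n + L + 1) ^ 2 : ℕ) : ℝ) := by
                exact_mod_cast hcov n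
            _ = (C : ℝ) * ((n : ℝ) + L + 1) ^ 2 := by push_cast; ring
      rcases Nat.eq_zero_or_pos n with hn | hn
      · subst hn; simp
      · exact (div_le_div_iff_of_pos_right (by exact_mod_cast hn)).mpr hlog
    have hfeq : (fun n : ℕ => Real.log ((C : ℝ) * ((n : ℝ) + L + 1) ^ 2) / n)
        = fun n : ℕ => Real.log C / n + 2 * (Real.log ((n : ℝ) + ((L : ℝ) + 1)) / n) := by
      funext n
      have hC0 : (C : ℝ) ≠ 0 := Nat.cast_ne_zero.mpr hC.ne'
      have hx0 : ((n : ℝ) + L + 1) ^ 2 ≠ 0 := by positivity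
      rw [Real.log_mul hC0 hx0, Real.log_pow, add_div,
        show (n : ℝ) + (L : ℝ) + 1 = (n : ℝ) + ((L : ℝ) + 1) from by ring]
      push_cast
      ring
    have hb : Tendsto (fun n : ℕ => Real.log ((C : ℝ) * ((n : ℝ) + L + 1) ^ 2) / n)
        atTop (𝓝 0) := by
      rw [hfeq]
      have hb1 := tendsto_const_div_atTop_nhds_zero_nat (Real.log C)
      have hb2 := (tendsto_log_shift_div ((L : ℝ) + 1) (by positivity)).const_mul 2
      have := hb1.add hb2
      simpa using this
    have ha : Tendsto (fun n : ℕ => Real.log (coverNum (iterJoin T 𝒰 n)) / n) atTop (𝓝 0) :=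
      tendsto_of_tendsto_of_tendsto_of_le_of_le tendsto_const_nhds hb h0 hub
    have hE : Tendsto (fun n : ℕ => ((Real.log (coverNum (iterJoin T 𝒰 n)) / n : ℝ) : EReal))
        atTop (𝓝 (0 : EReal)) := by
      have := (EReal.tendsto_coe (a := (0 : ℝ))).mpr ha
      simpa using this
    rw [coverEntropy]
    exact hE.limsup_eq
  have hAE : AE f = entropy T := rfl
  rw [hAE, entropy]
  apply le_antisymm
  · exact iSup₂_le fun 𝒰 h𝒰 => le_of_eq (key 𝒰 h𝒰)
  · rw [show (0 : EReal) = coverEntropy T {Set.univ} from (coverEntropy_univ_cover T).symm]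
    exact le_iSup₂ (f := fun 𝒰 (_ : 𝒰 ∈ {𝒰 : Set (Set ↥(orbitClosure f)) | IsOpenCover 𝒰}) =>
      coverEntropy T 𝒰) ({Set.univ} : Set (Set ↥(orbitClosure f))) isOpenCover_univ

end AnqieAux
namespace AnqieAux
open Anqie Filter Set Topology

/-! ### The spike function associated with an infinite set `R` -/

/-- Sparse enumeration of `R`: the `k²`-th element. -/
noncomputable def sseq (R : Set ℕ) (k : ℕ) : ℕ := Nat.nth (· ∈ R) (k * k)

/-- A sequence taking every value `max 0 (min 1 q)`, `q : ℚ`, infinitely often. -/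
noncomputable def vseq (k : ℕ) : ℝ :=
  max 0 (min 1 ((((Encodable.decode (Nat.unpair k).1 : Option ℚ)).getD 0 : ℚ) : ℝ))

/-- The spike function: `vseq k` at position `sseq R k`, zero elsewhere. -/
noncomputable def spike (R : Set ℕ) : ℕ → ℂ :=
  Function.extend (sseq R) (fun k => ((vseq k : ℝ) : ℂ)) (fun _ => 0)

lemma vseq_mem_Icc (k : ℕ) : vseq k ∈ Set.Icc (0 : ℝ) 1 := by
  constructor
  · exact le_max_left _ _
  · apply max_le zero_le_one (min_le_left _ _)

lemma vseq_pair (q : ℚ) (K : ℕ) :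
    vseq (Nat.pair (Encodable.encode q) K) = max 0 (min 1 (q : ℝ)) := by
  rw [vseq, Nat.unpair_pair]
  show max 0 (min 1 ((((Encodable.decode (Encodable.encode q) : Option ℚ)).getD 0 : ℚ) : ℝ)) = _
  rw [Encodable.encodek, Option.getD_some]

section sseqFacts
variable {R : Set ℕ} (hR : R.Infinite)
include hR

lemma sseq_strictMono : StrictMono (sseq R) := fun a b h =>
  Nat.nth_lt_nth hR |>.mpr (Nat.mul_self_lt_mul_self h)

lemma sseq_mem : ∀ k, sseq R k ∈ R := fun _ => Nat.nth_mem_of_infinite hR _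

lemma sseq_ge : ∀ k, k ≤ sseq R k := by
  intro k
  have h1 : k ≤ k * k := by nlinarith
  exact h1.trans (Nat.nth_strictMono hR).le_apply

lemma sseq_gap : ∀ k, sseq R k + (2 * k + 1) ≤ sseq R (k + 1) := by
  intro k
  have hmono := Nat.nth_strictMono (p := (· ∈ R)) hR
  have key : ∀ a d : ℕ, Nat.nth (· ∈ R) a + d ≤ Nat.nth (· ∈ R) (a + d) := by
    intro a d
    induction d with
    | zero => simp
    | succ d ih =>
      have h2 := hmono (Nat.lt_succ_self (a + d))
      have heq : (a + d).succ = a + (d + 1) := by omega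
      rw [heq] at h2
      omega
  have := key (k * k) (2 * k + 1)
  have harr : k * k + (2 * k + 1) = (k + 1) * (k + 1) := by ring
  rw [harr] at this
  exact this

lemma spike_apply (k : ℕ) : spike R (sseq R k) = ((vseq k : ℝ) : ℂ) :=
  (sseq_strictMono hR).injective.extend_apply _ _ k

omit hR in
lemma spike_zero {n : ℕ} (hn : ¬∃ k, sseq R k = n) : spike R n = 0 :=
  Function.extend_apply' _ _ _ hn

lemma spike_bound : ∀ n, ‖spike R n‖ ≤ 1 := by
  intro n
  by_cases h : ∃ k, sseq R k = n
  · obtain ⟨k, rfl⟩ := h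
    rw [spike_apply hR, Complex.norm_real, Real.norm_eq_abs,
      abs_of_nonneg (vseq_mem_Icc k).1]
    exact (vseq_mem_Icc k).2
  · rw [spike_zero h]
    simp

end sseqFacts

end AnqieAux
namespace AnqieAux
open Anqie Filter Set Topology

lemma dist_coe_real (a b : ℝ) : dist ((a : ℝ) : ℂ) ((b : ℝ) : ℂ) = |a - b| := by
  rw [Complex.dist_eq, ← Complex.ofReal_sub, Complex.norm_real, Real.norm_eq_abs]

lemma spike_span {R : Set ℕ} (hR : R.Infinite) :
    ∀ ε : ℝ, 0 < ε → ∃ C : ℕ, 0 < C ∧ ∀ N : ℕ, ∃ M : Finset ℕ,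
      M.card ≤ C * (N + 1) ^ 2 ∧
      ∀ m : ℕ, ∃ m' ∈ M, ∀ i < N, dist (spike R (m + i)) (spike R (m' + i)) < ε := by
  classical
  intro ε hε
  set B : ℕ := ⌈ε⁻¹⌉₊ + 1 with hB
  have hBpos : 0 < B := Nat.succ_pos _
  have hBR : (0 : ℝ) < B := by exact_mod_cast hBpos
  have hinvB : (1 : ℝ) / B < ε := by
    have h1 : ε⁻¹ < (B : ℝ) := by
      have h0 := Nat.le_ceil ε⁻¹
      have h2 : ((⌈ε⁻¹⌉₊ : ℝ)) < B := by exact_mod_cast Nat.lt_succ_self _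
      linarith
    rw [div_lt_iff₀ hBR]
    calc (1 : ℝ) = ε * ε⁻¹ := (mul_inv_cancel₀ hε.ne').symm
      _ < ε * B := mul_lt_mul_of_pos_left h1 hε
  refine ⟨B + 2, Nat.succ_pos _, ?_⟩
  intro N
  set M2 : Finset ℕ := (Finset.range N).biUnion
    (fun k => Finset.Icc (sseq R (k + 1) + 1 - N) (sseq R k)) with hM2
  set M1 : Finset ℕ := ((Finset.range N) ×ˢ (Finset.range (B + 1))).image
    (fun p => sseq R (Nat.pair (Encodable.encode ((p.2 : ℚ) / (B : ℚ))) N) - p.1) with hM1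
  refine ⟨insert (sseq R N + 1) (M2 ∪ M1), ?_, ?_⟩
  · -- cardinality bound
    have h2 : M2.card ≤ N * N := by
      calc M2.card ≤ ∑ k ∈ Finset.range N, (Finset.Icc (sseq R (k + 1) + 1 - N) (sseq R k)).card :=
            Finset.card_biUnion_le
        _ ≤ ∑ _k ∈ Finset.range N, N := by
            apply Finset.sum_le_sum
            intro k _
            rw [Nat.card_Icc]
            have := sseq_strictMono hR (show k < k + 1 by omega)
            omega
        _ = N * N := by rw [Finset.sum_const, Finset.card_range, smul_eq_mul]
    have h1 : M1.card ≤ N * (B + 1) := by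
      calc M1.card ≤ ((Finset.range N) ×ˢ (Finset.range (B + 1))).card := Finset.card_image_le
        _ = N * (B + 1) := by rw [Finset.card_product, Finset.card_range, Finset.card_range]
    calc (insert (sseq R N + 1) (M2 ∪ M1)).card ≤ (M2 ∪ M1).card + 1 :=
          Finset.card_insert_le _ _
      _ ≤ M2.card + M1.card + 1 := by have := Finset.card_union_le M2 M1; omega
      _ ≤ N * N + N * (B + 1) + 1 := by omega
      _ ≤ (B + 2) * (N + 1) ^ 2 := by nlinarith
  · intro m
    rcases Nat.eq_zero_or_pos N with hN | hN
    · exact ⟨sseq R N + 1, Finset.mem_insert_self _ _, fun i hi => absurd hi (by omega)⟩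
    by_cases hsp : ∃ k, m ≤ sseq R k ∧ sseq R k < m + N
    · obtain ⟨k₀, hk₀⟩ := hsp
      by_cases huniq : ∀ k, m ≤ sseq R k ∧ sseq R k < m + N → k = k₀
      · -- exactly one spike in the window
        have htm : m + (sseq R k₀ - m) = sseq R k₀ := by omega
        set t := sseq R k₀ - m with ht
        have htN : t < N := by omega
        have hu0 : 0 ≤ vseq k₀ := (vseq_mem_Icc k₀).1
        have hu1 : vseq k₀ ≤ 1 := (vseq_mem_Icc k₀).2
        set j : ℕ := ⌊vseq k₀ * B⌋₊ with hj
        have hjle : (j : ℝ) ≤ vseq k₀ * B := Nat.floor_le (by positivity)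
        have hjlt : vseq k₀ * B < (j : ℝ) + 1 := Nat.lt_floor_add_one _
        have hjB : j ≤ B := by
          have hub : vseq k₀ * B ≤ (B : ℝ) := by nlinarith
          calc j ≤ ⌊(B : ℝ)⌋₊ := Nat.floor_mono hub
            _ = B := Nat.floor_natCast B
        have hjdist : |vseq k₀ - (j : ℝ) / B| < ε := by
          have h1 : (j : ℝ) / B ≤ vseq k₀ := by rw [div_le_iff₀ hBR]; exact hjle
          have h2 : vseq k₀ < ((j : ℝ) + 1) / B := by rw [lt_div_iff₀ hBR]; exact hjlt
          have h3 : ((j : ℝ) + 1) / B = (j : ℝ) / B + 1 / B := by ring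
          rw [abs_of_nonneg (by linarith)]
          linarith
        set K := Nat.pair (Encodable.encode ((j : ℚ) / (B : ℚ))) N with hK
        have hKN : N ≤ K := Nat.right_le_pair _ _
        have hvK : vseq K = (j : ℝ) / B := by
          rw [hK, vseq_pair]
          have hx : (((j : ℚ) / (B : ℚ) : ℚ) : ℝ) = (j : ℝ) / B := by push_cast; ring
          rw [hx, min_eq_right ((div_le_one hBR).mpr (by exact_mod_cast hjB)),
            max_eq_right (by positivity)]
        have hKs : K ≤ sseq R K := sseq_ge hR K
        have htK : t ≤ sseq R K := by omega
        set m' := sseq R K - t with hm'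
        have hm't : m' + t = sseq R K := by omega
        refine ⟨m', ?_, ?_⟩
        · apply Finset.mem_insert_of_mem
          apply Finset.mem_union_right
          rw [hM1]
          apply Finset.mem_image.mpr
          refine ⟨(t, j), ?_, ?_⟩
          · rw [Finset.mem_product]
            exact ⟨Finset.mem_range.mpr htN, Finset.mem_range.mpr (by omega)⟩
          · show sseq R (Nat.pair (Encodable.encode ((j : ℚ) / (B : ℚ))) N) - t = m'
            rw [← hK, hm']
        · intro i hi
          by_cases hit : i = t
          · rw [hit, show m + t = sseq R k₀ from htm, spike_apply hR,
              show m' + t = sseq R K from hm't, spike_apply hR, hvK, dist_coe_real]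
            exact hjdist
          · have hz1 : spike R (m + i) = 0 := by
              apply spike_zero
              rintro ⟨k, hk⟩
              have hkk : k = k₀ := huniq k ⟨by omega, by omega⟩
              subst hkk
              exact hit (by omega)
            have hz2 : spike R (m' + i) = 0 := by
              apply spike_zero
              rintro ⟨k, hk⟩
              rcases lt_trichotomy k K with h | h | h
              · have h1 : k ≤ K - 1 := by omega
                have h2 := (sseq_strictMono hR).monotone h1
                have h3 := sseq_gap hR (K - 1)
                have h4 : K - 1 + 1 = K := by omega
                rw [h4] at h3
                omega
              · subst h
                exact hit (by omega)
              · have h2 := (sseq_strictMono hR).monotone (show K + 1 ≤ k by omega)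
                have h3 := sseq_gap hR K
                omega
            rw [hz1, hz2, dist_self]
            exact hε
      · -- at least two spikes in the window
        push_neg at huniq
        obtain ⟨k₁, hk₁cond, hk₁ne⟩ := huniq
        have claim : ∀ p q : ℕ, p < q → m ≤ sseq R p ∧ sseq R p < m + N →
            m ≤ sseq R q ∧ sseq R q < m + N →
            m ∈ Finset.Icc (sseq R (p + 1) + 1 - N) (sseq R p) ∧ p < N := by
          intro p q hpq hp hq
          have h2 := (sseq_strictMono hR).monotone (show p + 1 ≤ q from hpq)
          have h3 := sseq_gap hR p
          constructor
          · rw [Finset.mem_Icc]; omega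
          · omega
        have hself : ∀ i < N, dist (spike R (m + i)) (spike R (m + i)) < ε :=
          fun i _ => by rw [dist_self]; exact hε
        rcases hk₁ne.lt_or_gt with h | h
        · obtain ⟨hmem, hlt⟩ := claim k₁ k₀ h hk₁cond hk₀
          exact ⟨m, Finset.mem_insert_of_mem (Finset.mem_union_left _
            (Finset.mem_biUnion.mpr ⟨k₁, Finset.mem_range.mpr hlt, hmem⟩)), hself⟩
        · obtain ⟨hmem, hlt⟩ := claim k₀ k₁ h hk₀ hk₁cond
          exact ⟨m, Finset.mem_insert_of_mem (Finset.mem_union_left _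
            (Finset.mem_biUnion.mpr ⟨k₀, Finset.mem_range.mpr hlt, hmem⟩)), hself⟩
    · -- no spike in the window
      push_neg at hsp
      refine ⟨sseq R N + 1, Finset.mem_insert_self _ _, ?_⟩
      intro i hi
      have hz1 : spike R (m + i) = 0 := by
        apply spike_zero
        rintro ⟨k, hk⟩
        have := hsp k
        omega
      have hz2 : spike R (sseq R N + 1 + i) = 0 := by
        apply spike_zero
        rintro ⟨k, hk⟩
        rcases le_or_gt k N with h | h
        · have := (sseq_strictMono hR).monotone h
          omega
        · have h2 := (sseq_strictMono hR).monotone (show N + 1 ≤ k from h)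
          have h3 := sseq_gap hR N
          omega
      rw [hz1, hz2, dist_self]
      exact hε

end AnqieAux
namespace AnqieAux
open Anqie Filter Set Topology

lemma vseq_comap_neBot {x : ℝ} (hx : x ∈ Set.Icc (0 : ℝ) 1) :
    (Filter.comap vseq (𝓝 x)).NeBot := by
  rw [Filter.comap_neBot_iff]
  intro t ht
  obtain ⟨δ, hδ, hball⟩ := Metric.mem_nhds_iff.mp ht
  obtain ⟨q, hq1, hq2⟩ := exists_rat_btwn (lt_add_of_pos_right x hδ)
  refine ⟨Nat.pair (Encodable.encode q) 0, hball ?_⟩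
  rw [Metric.mem_ball, vseq_pair, Real.dist_eq]
  have hx0 := hx.1
  have hx1 := hx.2
  have h1 : x ≤ min 1 (q : ℝ) := le_min hx1 hq1.le
  rw [max_eq_right (le_trans hx0 h1)]
  have h3 : min 1 (q : ℝ) ≤ q := min_le_right _ _
  rw [abs_of_nonneg (by linarith)]
  linarith

lemma spike_bound' (R : Set ℕ) : ∀ n, ‖spike R n‖ ≤ 1 := by
  classical
  intro n
  rw [spike, Function.extend_def]
  split_ifs with h
  · rw [Complex.norm_real, Real.norm_eq_abs, abs_of_nonneg (vseq_mem_Icc _).1]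
    exact (vseq_mem_Icc _).2
  · simp

/-- The spike function as an element of `E₀`. -/
noncomputable def spikeE0 (R : Set ℕ) (hR : R.Infinite) : E0sub :=
  ⟨BoundedContinuousFunction.ofNormedAddCommGroup (spike R) continuous_of_discreteTopology 1
      (spike_bound' R),
    AE_eq_zero_of_span (spike R) (spike_bound' R) (spike_span hR)⟩

/-- The constant function `1` as an element of `E₀`. -/
noncomputable def oneE0 : E0sub :=
  ⟨1, by rw [BoundedContinuousFunction.coe_one]; exact AE_const 1⟩

theorem part1 (R : Set ℕ) (hR : R.Infinite) :
    ¬ (closure (Anqie.evalChar '' R)).Countable := by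
  classical
  intro hcount
  set F0 : E0sub := spikeE0 R hR with hF0
  have hchar : ∀ x ∈ Set.Icc (0 : ℝ) 1, ∃ ψ : ↥CharSpace,
      ψ ∈ closure (evalChar '' R) ∧ (ψ : E0sub → ℂ) F0 = (x : ℂ) := by
    intro x hx
    haveI hnb : (Filter.comap vseq (𝓝 x)).NeBot := vseq_comap_neBot hx
    set U : Ultrafilter ℕ := Ultrafilter.of (Filter.comap vseq (𝓝 x)) with hU
    have hvU : Tendsto vseq (U : Filter ℕ) (𝓝 x) :=
      tendsto_comap.mono_left (Ultrafilter.of_le _)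
    have hlim : ∀ g : E0sub, ∃ z : ℂ,
        Tendsto (fun k => (g : BoundedContinuousFunction ℕ ℂ) (sseq R k)) (U : Filter ℕ) (𝓝 z) := by
      intro g
      have hK : IsCompact (Metric.closedBall (0 : ℂ) ‖(g : BoundedContinuousFunction ℕ ℂ)‖) :=
        isCompact_closedBall _ _
      have hmem : ∀ k, (g : BoundedContinuousFunction ℕ ℂ) (sseq R k) ∈
          Metric.closedBall (0 : ℂ) ‖(g : BoundedContinuousFunction ℕ ℂ)‖ := by
        intro k
        rw [Metric.mem_closedBall, dist_zero_right]
        exact BoundedContinuousFunction.norm_coe_le_norm _ _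
      have hle : (↑(U.map (fun k => (g : BoundedContinuousFunction ℕ ℂ) (sseq R k))) : Filter ℂ)
          ≤ 𝓟 (Metric.closedBall (0 : ℂ) ‖(g : BoundedContinuousFunction ℕ ℂ)‖) := by
        rw [le_principal_iff, Ultrafilter.coe_map, Filter.mem_map]
        exact Filter.univ_mem' hmem
      obtain ⟨z, _, hz⟩ := hK.ultrafilter_le_nhds _ hle
      exact ⟨z, hz⟩
    choose lim hlimspec using hlim
    have hone : lim oneE0 = 1 := by
      refine tendsto_nhds_unique (hlimspec oneE0) ?_
      have h1 : ∀ k : ℕ, (oneE0 : BoundedContinuousFunction ℕ ℂ) (sseq R k) = 1 := fun _ => rfl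
      exact tendsto_const_nhds.congr fun k => (h1 k).symm
    have hCS : lim ∈ CharSpace := by
      refine ⟨⟨oneE0, ?_⟩, ?_, ?_, ?_⟩
      · rw [hone]; exact one_ne_zero
      · intro f g h hfg
        refine tendsto_nhds_unique (hlimspec h) (((hlimspec f).add (hlimspec g)).congr fun k => ?_)
        rw [hfg]; simp
      · intro c f g hfg
        refine tendsto_nhds_unique (hlimspec g) (((hlimspec f).const_mul c).congr fun k => ?_)
        rw [hfg]; simp
      · intro f g h hfg
        refine tendsto_nhds_unique (hlimspec h) (((hlimspec f).mul (hlimspec g)).congr fun k => ?_)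
        rw [hfg]; simp
    refine ⟨⟨lim, hCS⟩, ?_, ?_⟩
    · have htend : Tendsto (fun k => evalChar (sseq R k)) (U : Filter ℕ)
          (𝓝 (⟨lim, hCS⟩ : ↥CharSpace)) := by
        rw [tendsto_subtype_rng]
        exact tendsto_pi_nhds.mpr fun g => hlimspec g
      exact mem_closure_of_tendsto htend (Filter.Eventually.of_forall fun k =>
        ⟨sseq R k, sseq_mem hR k, rfl⟩)
    · refine tendsto_nhds_unique (hlimspec F0) ?_
      have hcoe : ∀ k : ℕ, (F0 : BoundedContinuousFunction ℕ ℂ) (sseq R k) = ((vseq k : ℝ) : ℂ) :=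
        fun k => spike_apply hR k
      exact ((Complex.continuous_ofReal.tendsto x).comp hvU).congr fun k => (hcoe k).symm
  -- countability contradiction
  have hpre : Set.Icc (0 : ℝ) 1 ⊆ (fun r : ℝ => (r : ℂ)) ⁻¹'
      ((fun ψ : ↥CharSpace => (ψ : E0sub → ℂ) F0) '' closure (evalChar '' R)) := by
    intro x hx
    obtain ⟨ψ, h1, h2⟩ := hchar x hx
    exact ⟨ψ, h1, h2⟩
  have hc2 : ((fun ψ : ↥CharSpace => (ψ : E0sub → ℂ) F0) '' closure (evalChar '' R)).Countable :=
    hcount.image _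
  have hc3 : (Set.Icc (0 : ℝ) 1).Countable :=
    (hc2.preimage Complex.ofReal_injective).mono hpre
  have hcard := Cardinal.mk_Icc_real (zero_lt_one (α := ℝ))
  have hle : (Cardinal.continuum : Cardinal) ≤ Cardinal.aleph0 := by
    rw [← hcard]
    exact Cardinal.mk_le_aleph0_iff.mpr hc3.to_subtype
  exact absurd hle Cardinal.aleph0_lt_continuum.not_ge

end AnqieAux
namespace AnqieAux
open Anqie Filter Set Topology

theorem part2 : ¬ TopologicalSpace.MetrizableSpace ↥Anqie.CharSpace := by
  classical
  intro hm
  haveI := hm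
  haveI : FirstCountableTopology ↥Anqie.CharSpace := by
    letI : MetricSpace ↥Anqie.CharSpace := TopologicalSpace.metrizableSpaceMetric _
    infer_instance
  have huniv := part1 Set.univ Set.infinite_univ
  have himgc : (evalChar '' Set.univ).Countable := (Set.countable_univ).image _
  obtain ⟨φ, hφcl, hφnot⟩ : ∃ φ, φ ∈ closure (evalChar '' Set.univ) ∧ φ ∉ evalChar '' Set.univ := by
    by_contra h
    push_neg at h
    exact huniv (himgc.mono h)
  obtain ⟨u, hu, hulim⟩ := mem_closure_iff_seq_limit.mp hφcl
  have hn : ∀ j : ℕ, ∃ n : ℕ, evalChar n = u j := by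
    intro j
    obtain ⟨n, _, hn⟩ := hu j
    exact ⟨n, hn⟩
  choose n hneq using hn
  have himg : evalChar '' Set.range n = Set.range u := by
    ext ψ
    constructor
    · rintro ⟨_, ⟨j, rfl⟩, rfl⟩
      exact ⟨j, (hneq j).symm⟩
    · rintro ⟨j, rfl⟩
      exact ⟨n j, ⟨j, rfl⟩, hneq j⟩
  have hφcl' : φ ∈ closure (Set.range u) :=
    mem_closure_of_tendsto hulim (Filter.Eventually.of_forall fun j => ⟨j, rfl⟩)
  have hRinf : (Set.range n).Infinite := by
    intro hfin
    have hclosed : IsClosed (evalChar '' Set.range n) := (hfin.image _).isClosed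
    have : φ ∈ evalChar '' Set.range n := by
      rw [← hclosed.closure_eq, himg]
      exact hφcl'
    exact hφnot (Set.image_mono (Set.subset_univ _) this)
  apply part1 (Set.range n) hRinf
  have hcpt : IsCompact (insert φ (Set.range u)) := hulim.isCompact_insert_range
  have hsub : closure (evalChar '' Set.range n) ⊆ insert φ (Set.range u) := by
    rw [himg]
    exact closure_minimal (Set.subset_insert _ _) hcpt.isClosed
  exact (((Set.countable_range u).insert φ).mono hsub)

end AnqieAux

/-- For every infinite subset `R ⊆ ℕ`, the closure of
`{ι(n) : n ∈ R}` in the arithmetic compactification `E₀(ℕ)` is uncountable;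
consequently `E₀(ℕ)` is not metrizable. -/
theorem closure_of_evalChar_image_uncountable_and_not_metrizable :
    (∀ R : Set ℕ, R.Infinite → ¬ (closure (Anqie.evalChar '' R)).Countable) ∧
    ¬ TopologicalSpace.MetrizableSpace ↥Anqie.CharSpace :=
  ⟨AnqieAux.part1, AnqieAux.part2⟩
end

section
/- Let X be a compact Hausdorff space and f : ℕ → X a map with finite range. Then the limit lim_{m → ∞} (log |R_m(f)|)/m exists and equals AE(f), where R_m(f) = {(f(lm), f(lm+1), …, f(lm+m−1)) : l ∈ ℕ} is the set of m-blocks of f starting at multiples of m and |R_m(f)| is its cardinality. -/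
open Filter Set Topology

namespace AnqieProof

variable {X : Type*}

/-- set of length-`m` windows of `f` -/
def W (f : ℕ → X) (m : ℕ) : Set (Fin m → X) :=
  {w | ∃ n : ℕ, ∀ j : Fin m, w j = f (n + j)}

def Rset (f : ℕ → X) (m : ℕ) : Set (Fin m → X) :=
  {w | ∃ l : ℕ, ∀ j : Fin m, w j = f (l * m + j)}

noncomputable def C (f : ℕ → X) (m : ℕ) : ℕ := Nat.card (W f m)
noncomputable def r (f : ℕ → X) (m : ℕ) : ℕ := Nat.card (Rset f m)

variable {f : ℕ → X}

lemma W_finite (hf : (Set.range f).Finite) (m : ℕ) : (W f m).Finite := by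
  refine (Set.Finite.pi (fun _ : Fin m => hf)).subset ?_
  rintro w ⟨n, hn⟩ j _
  exact ⟨n + j, (hn j).symm⟩

lemma Rset_subset_W (m : ℕ) : Rset f m ⊆ W f m := by
  rintro w ⟨l, hl⟩; exact ⟨l * m, hl⟩

lemma W_nonempty (m : ℕ) : (W f m).Nonempty :=
  ⟨fun j => f (0 + j), ⟨0, fun _ => rfl⟩⟩

lemma Rset_nonempty (m : ℕ) : (Rset f m).Nonempty :=
  ⟨fun j => f (0 * m + j), ⟨0, fun _ => rfl⟩⟩

lemma C_pos (hf : (Set.range f).Finite) (m : ℕ) : 0 < C f m := by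
  have := (W_finite hf m).to_subtype
  have := (W_nonempty (f := f) m).to_subtype
  exact Nat.card_pos

lemma r_pos (hf : (Set.range f).Finite) (m : ℕ) : 0 < r f m := by
  have := ((W_finite hf m).subset (Rset_subset_W m)).to_subtype
  have := (Rset_nonempty (f := f) m).to_subtype
  exact Nat.card_pos

lemma r_le_C (hf : (Set.range f).Finite) (m : ℕ) : r f m ≤ C f m :=
  Nat.card_mono (W_finite hf m) (Rset_subset_W m)

lemma C_subadd (hf : (Set.range f).Finite) (m k : ℕ) :
    C f (m + k) ≤ C f m * C f k := by
  have h1 := (W_finite hf m).to_subtype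
  have h2 := (W_finite hf k).to_subtype
  have key : Nat.card (W f (m + k)) ≤ Nat.card ((W f m) × (W f k)) := by
    refine Nat.card_le_card_of_injective (fun w =>
      (⟨fun j => w.1 (Fin.castAdd k j), ?_⟩, ⟨fun j => w.1 (Fin.natAdd m j), ?_⟩)) ?_
    · obtain ⟨n, hn⟩ := w.2
      refine ⟨n, fun j => ?_⟩
      show w.1 (Fin.castAdd k j) = _
      rw [hn]; simp
    · obtain ⟨n, hn⟩ := w.2
      refine ⟨n + m, fun j => ?_⟩
      show w.1 (Fin.natAdd m j) = _
      rw [hn]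
      congr 1
      simp [Fin.natAdd]
      omega
    · rintro ⟨w, hw⟩ ⟨w', hw'⟩ h
      have h1 := congrArg (fun p => p.1.1) h
      have h2 := congrArg (fun p => p.2.1) h
      simp only at h1 h2
      ext j
      refine Fin.addCases (fun i => ?_) (fun i => ?_) j
      · exact congrFun h1 i
      · exact congrFun h2 i
  simpa [C, Nat.card_prod] using key

lemma C_km_le (hf : (Set.range f).Finite) {m : ℕ} (hm : 0 < m) (k : ℕ) :
    C f (k * m) ≤ m * r f m ^ (k + 1) := by
  have hR := ((W_finite hf m).subset (Rset_subset_W m)).to_subtype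
  have : C f (k * m) ≤ Nat.card (Fin m × (Fin (k + 1) → Rset f m)) := by
    refine Nat.card_le_card_of_injective (fun w =>
      (⟨w.2.choose % m, Nat.mod_lt _ hm⟩,
        fun i => ⟨fun j => f ((w.2.choose / m + i) * m + j), ⟨w.2.choose / m + i, fun _ => rfl⟩⟩)) ?_
    rintro ⟨w, hw⟩ ⟨w', hw'⟩ h
    have hs : hw.choose % m = hw'.choose % m := congrArg (fun p => (p.1 : ℕ)) h
    have hb : ∀ (i : Fin (k + 1)) (j : Fin m),
        f ((hw.choose / m + i) * m + j) = f ((hw'.choose / m + i) * m + j) := by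
      intro i j
      exact congrFun (congrArg (fun p => (p.2 i : Fin m → X)) h) j
    set n := hw.choose with hn
    set n' := hw'.choose with hn'
    have hwspec : ∀ j : Fin (k * m), w j = f (n + j) := hw.choose_spec
    have hwspec' : ∀ j : Fin (k * m), w' j = f (n' + j) := hw'.choose_spec
    ext j
    have hjlt : (j : ℕ) < k * m := j.isLt
    have hi : (n % m + j) / m < k + 1 := by
      rw [Nat.div_lt_iff_lt_mul hm]
      have h1 := Nat.mod_lt n hm
      have h2 : (k + 1) * m = k * m + m := by ring
      omega
    have hj' : (n % m + j) % m < m := Nat.mod_lt _ hm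
    have key := hb ⟨(n % m + j) / m, hi⟩ ⟨(n % m + j) % m, hj'⟩
    simp only at key
    have e1 : (n / m + (n % m + j) / m) * m + (n % m + j) % m = n + j := by
      have d1 := Nat.div_add_mod n m
      have d2 := Nat.div_add_mod (n % m + j) m
      have := Nat.mul_comm (n / m + (n % m + j) / m) m
      nlinarith [d1, d2]
    have e2 : (n' / m + (n % m + j) / m) * m + (n % m + j) % m = n' + j := by
      have d1 := Nat.div_add_mod n' m
      have d2 := Nat.div_add_mod (n' % m + j) m
      rw [← hs] at d2
      nlinarith [d1, d2]
    show w j = w' j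
    rw [hwspec j, hwspec' j, ← e1, ← e2, key]
  simpa [Nat.card_prod, Nat.card_fun, r, Nat.card_eq_fintype_card] using this

noncomputable def u (f : ℕ → X) (n : ℕ) : ℝ := Real.log (C f n)

lemma u_nonneg (n : ℕ) : 0 ≤ u f n := Real.log_natCast_nonneg _

lemma u_subadd (hf : (Set.range f).Finite) : Subadditive (u f) := by
  intro m n
  have h := C_subadd hf m n
  have hpos : (0 : ℝ) < ((C f (m + n) : ℕ) : ℝ) := by exact_mod_cast C_pos hf (m + n)
  calc Real.log (C f (m + n)) ≤ Real.log ((C f m : ℝ) * (C f n : ℝ)) := by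
        apply Real.log_le_log hpos
        exact_mod_cast h
    _ = u f m + u f n := by
        apply Real.log_mul <;>
          · exact_mod_cast (C_pos hf _).ne'

lemma u_bddBelow : BddBelow (Set.range fun n => u f n / n) := by
  refine ⟨0, ?_⟩
  rintro x ⟨n, rfl⟩
  exact div_nonneg (u_nonneg n) (Nat.cast_nonneg n)

lemma lim_le_log_r (hf : (Set.range f).Finite) {m : ℕ} (hm : 0 < m) :
    (u_subadd hf).lim ≤ Real.log (r f m) / m := by
  have hmR : (0 : ℝ) < (m : ℝ) := by exact_mod_cast hm
  have hrR : (1 : ℝ) ≤ ((r f m : ℕ) : ℝ) := by exact_mod_cast r_pos hf m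
  -- a_k := u (k*m) / (k*m)
  have ha : Tendsto (fun k : ℕ => u f (k * m) / ((k * m : ℕ) : ℝ)) atTop
      (𝓝 (u_subadd hf).lim) := by
    refine ((u_subadd hf).tendsto_lim u_bddBelow).comp ?_
    exact tendsto_atTop_mono (fun k => Nat.le_mul_of_pos_right k hm) tendsto_id
  -- b_k
  set b : ℕ → ℝ := fun k => Real.log m / m * (1 / (k : ℝ)) +
      (1 + 1 / (k : ℝ)) * (Real.log (r f m) / m) with hb
  have hbt : Tendsto b atTop (𝓝 (Real.log (r f m) / m)) := by
    have h1 : Tendsto (fun k : ℕ => Real.log m / m * (1 / (k : ℝ))) atTop (𝓝 0) := by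
      simpa using tendsto_one_div_atTop_nhds_zero_nat.const_mul (Real.log m / m)
    have h2 : Tendsto (fun k : ℕ => (1 + 1 / (k : ℝ)) * (Real.log (r f m) / m)) atTop
        (𝓝 (Real.log (r f m) / m)) := by
      have h2a : Tendsto (fun k : ℕ => (1 : ℝ) + 1 / (k : ℝ)) atTop (𝓝 (1 + 0)) :=
        tendsto_const_nhds.add tendsto_one_div_atTop_nhds_zero_nat
      have := h2a.mul_const (Real.log (r f m) / m)
      simpa using this
    rw [hb]
    simpa using h1.add h2
  refine le_of_tendsto_of_tendsto ha hbt ?_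
  filter_upwards [eventually_ge_atTop 1] with k hk
  have hkR : (0 : ℝ) < (k : ℝ) := by exact_mod_cast hk
  have hlog : u f (k * m) ≤ Real.log m + ((k : ℝ) + 1) * Real.log (r f m) := by
    have hC : ((C f (k * m) : ℕ) : ℝ) ≤ ((m * r f m ^ (k + 1) : ℕ) : ℝ) := by
      exact_mod_cast C_km_le hf hm k
    have hCpos : (0 : ℝ) < ((C f (k * m) : ℕ) : ℝ) := by exact_mod_cast C_pos hf _
    calc u f (k * m) ≤ Real.log ((m * r f m ^ (k + 1) : ℕ) : ℝ) := Real.log_le_log hCpos hC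
      _ = Real.log m + ((k : ℝ) + 1) * Real.log (r f m) := by
          push_cast
          rw [Real.log_mul (by positivity) (by positivity), Real.log_pow]
          push_cast
          ring
  have hdiv : u f (k * m) / ((k * m : ℕ) : ℝ) ≤
      (Real.log m + ((k : ℝ) + 1) * Real.log (r f m)) / ((k : ℝ) * m) := by
    push_cast
    exact div_le_div_of_nonneg_right hlog (by positivity)
  refine hdiv.trans_eq ?_
  rw [hb]
  field_simp

lemma tendsto_log_r (hf : (Set.range f).Finite) :
    Tendsto (fun m : ℕ => Real.log (r f m) / m) atTop (𝓝 (u_subadd hf).lim) := by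
  refine tendsto_of_tendsto_of_tendsto_of_le_of_le' tendsto_const_nhds
    ((u_subadd hf).tendsto_lim u_bddBelow) ?_ ?_
  · filter_upwards [eventually_ge_atTop 1] with m hm
    exact lim_le_log_r hf hm
  · filter_upwards with m
    have h1 : ((r f m : ℕ) : ℝ) ≤ ((C f m : ℕ) : ℝ) := by exact_mod_cast r_le_C hf m
    have h2 : (0 : ℝ) < ((r f m : ℕ) : ℝ) := by exact_mod_cast r_pos hf m
    exact div_le_div_of_nonneg_right (Real.log_le_log h2 h1) (Nat.cast_nonneg m)


section Topo

open Anqie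

variable {X : Type*} [TopologicalSpace X] [CompactSpace X] [T2Space X] {f : ℕ → X}

lemma orbit_mem (f : ℕ → X) (n : ℕ) : (fun k => f (n + k)) ∈ orbitClosure f :=
  subset_closure ⟨n, fun _ => rfl⟩

lemma coord_mem_range (hf : (Set.range f).Finite) {ω : ℕ → X}
    (hω : ω ∈ orbitClosure f) (k : ℕ) : ω k ∈ Set.range f := by
  have hcl : IsClosed {ω' : ℕ → X | ω' k ∈ Set.range f} :=
    hf.isClosed.preimage (continuous_apply k)
  have hsub : orbitSet f ⊆ {ω' : ℕ → X | ω' k ∈ Set.range f} := by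
    rintro ω' ⟨n, hn⟩
    exact ⟨n + k, (hn k).symm⟩
  exact closure_minimal hsub hcl hω

lemma prefix_mem_W (hf : (Set.range f).Finite) {ω : ℕ → X}
    (hω : ω ∈ orbitClosure f) (m : ℕ) : (fun j : Fin m => ω j) ∈ W f m := by
  have hcont : Continuous (fun ω' : ℕ → X => fun j : Fin m => ω' (j : ℕ)) :=
    continuous_pi fun j => continuous_apply _
  have hmaps : Set.MapsTo (fun ω' : ℕ → X => fun j : Fin m => ω' (j : ℕ))
      (orbitSet f) (W f m) := by
    rintro ω' ⟨n, hn⟩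
    exact ⟨n, fun j => hn j⟩
  have h := map_mem_closure hcont hω hmaps
  rwa [(W_finite hf m).isClosed.closure_eq] at h

lemma compactSpace_orbitClosure (f : ℕ → X) : CompactSpace (orbitClosure f) :=
  isCompact_iff_compactSpace.mp isClosed_closure.isCompact

lemma continuous_shiftOn (f : ℕ → X) : Continuous (shiftOn f) := by
  have h : Continuous fun ω : orbitClosure f => fun k => (ω : ℕ → X) (k + 1) :=
    continuous_pi fun k => (continuous_apply (k + 1)).comp continuous_subtype_val
  exact h.subtype_mk _

lemma shiftOn_iterate (f : ℕ → X) (j : ℕ) (ω : orbitClosure f) (k : ℕ) :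
    (((shiftOn f)^[j] ω : orbitClosure f) : ℕ → X) k = (ω : ℕ → X) (k + j) := by
  induction j generalizing ω with
  | zero => rfl
  | succ j ih =>
    rw [Function.iterate_succ_apply, ih (shiftOn f ω)]
    rfl

def Vof (f : ℕ → X) (a : X) : Set X := (Set.range f \ {a})ᶜ

lemma isOpen_Vof (hf : (Set.range f).Finite) (a : X) : IsOpen (Vof f a) :=
  isOpen_compl_iff.mpr (hf.subset Set.diff_subset).isClosed

lemma self_mem_Vof (f : ℕ → X) (a : X) : a ∈ Vof f a := fun h => h.2 rfl

lemma eq_of_mem_Vof {a x : X} (hx : x ∈ Set.range f) (h : x ∈ Vof f a) : x = a := by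
  by_contra hne
  exact h ⟨hx, hne⟩

lemma isOpen_cylSet (hf : (Set.range f).Finite) {m : ℕ} (w : Fin m → X) :
    IsOpen {ω : orbitClosure f | ∀ j : Fin m, (ω : ℕ → X) (j : ℕ) = w j} := by
  have he : {ω : orbitClosure f | ∀ j : Fin m, (ω : ℕ → X) (j : ℕ) = w j}
      = ⋂ j : Fin m, (fun ω : orbitClosure f => (ω : ℕ → X) (j : ℕ)) ⁻¹' Vof f (w j) := by
    ext ω
    simp only [Set.mem_setOf_eq, Set.mem_iInter, Set.mem_preimage]
    constructor
    · intro h j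
      rw [h j]
      exact self_mem_Vof f (w j)
    · intro h j
      exact eq_of_mem_Vof (coord_mem_range hf ω.2 j) (h j)
  rw [he]
  exact isOpen_iInter_of_finite fun j =>
    (isOpen_Vof hf (w j)).preimage ((continuous_apply ((j : Fin m) : ℕ)).comp continuous_subtype_val)

/-- The zero-coordinate letter cover of the orbit closure. -/
def U0 (f : ℕ → X) : Set (Set (orbitClosure f)) :=
  (fun a : X => (fun ω : orbitClosure f => (ω : ℕ → X) 0) ⁻¹' Vof f a) '' Set.range f

lemma isOpenCover_U0 (hf : (Set.range f).Finite) : IsOpenCover (U0 f) := by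
  constructor
  · rintro U ⟨a, _, rfl⟩
    exact (isOpen_Vof hf a).preimage ((continuous_apply 0).comp continuous_subtype_val)
  · ext ω
    simp only [Set.mem_sUnion, Set.mem_univ, iff_true]
    exact ⟨_, ⟨(ω : ℕ → X) 0, coord_mem_range hf ω.2 0, rfl⟩, self_mem_Vof f _⟩

lemma coverSet_nonempty {Z : Type*} [TopologicalSpace Z] [CompactSpace Z]
    {𝒱 : Set (Set Z)} (hop : ∀ U ∈ 𝒱, IsOpen U) (hcov : ⋃₀ 𝒱 = Set.univ) :
    {k | ∃ F : Finset (Set Z), (↑F : Set (Set Z)) ⊆ 𝒱 ∧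
      ⋃₀ (↑F : Set (Set Z)) = Set.univ ∧ F.card = k}.Nonempty := by
  classical
  have hcov' : Set.univ ⊆ ⋃ V : 𝒱, (V : Set Z) := by
    rw [← Set.sUnion_eq_iUnion, hcov]
  obtain ⟨t, ht⟩ := isCompact_univ.elim_finite_subcover (fun V : 𝒱 => (V : Set Z))
    (fun V => hop V V.2) hcov'
  refine ⟨(t.image (fun V : 𝒱 => (V : Set Z))).card, t.image (fun V : 𝒱 => (V : Set Z)), ?_, ?_, rfl⟩
  · intro V hV
    simp only [Finset.coe_image, Set.mem_image, Finset.mem_coe] at hV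
    obtain ⟨V', _, rfl⟩ := hV
    exact V'.2
  · apply Set.eq_univ_of_univ_subset
    intro z hz
    obtain ⟨V, hVt, hzV⟩ := Set.mem_iUnion₂.mp (ht hz)
    exact ⟨(V : Set Z), by simpa using Finset.mem_image_of_mem (fun V : 𝒱 => (V : Set Z)) hVt, hzV⟩

lemma isOpenCover_iterJoin {Z : Type*} [TopologicalSpace Z] {T : Z → Z} (hT : Continuous T)
    {𝒰 : Set (Set Z)} (h : IsOpenCover 𝒰) (n : ℕ) : IsOpenCover (iterJoin T 𝒰 n) := by
  constructor
  · rintro V ⟨uu, huu, rfl⟩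
    exact isOpen_iInter_of_finite fun j => (h.1 _ (huu j)).preimage (hT.iterate _)
  · apply Set.eq_univ_of_univ_subset
    intro z _
    have hz : ∀ j : Fin n, ∃ U ∈ 𝒰, T^[(j : ℕ)] z ∈ U := by
      intro j
      have : T^[(j : ℕ)] z ∈ ⋃₀ 𝒰 := by rw [h.2]; trivial
      exact this
    choose uu huu hmem using hz
    exact ⟨⋂ j : Fin n, T^[(j : ℕ)] ⁻¹' uu j, ⟨uu, huu, rfl⟩, Set.mem_iInter.mpr fun j => hmem j⟩

lemma C_le_coverNum (hf : (Set.range f).Finite) (n : ℕ) :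
    C f n ≤ coverNum (iterJoin (shiftOn f) (U0 f) n) := by
  haveI := compactSpace_orbitClosure f
  have hjoin := isOpenCover_iterJoin (continuous_shiftOn f) (isOpenCover_U0 hf) n
  refine le_csInf (coverSet_nonempty hjoin.1 hjoin.2) ?_
  rintro k ⟨F, hFsub, hFcov, rfl⟩
  haveI : Finite (W f n) := (W_finite hf n).to_subtype
  have hpt : ∀ w : W f n, ∃ V ∈ F,
      (⟨fun k => f (w.2.choose + k), orbit_mem f _⟩ : orbitClosure f) ∈ V := by
    intro w
    have hmem : (⟨fun k => f (w.2.choose + k), orbit_mem f _⟩ : orbitClosure f)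
        ∈ ⋃₀ (↑F : Set (Set (orbitClosure f))) := by
      rw [hFcov]; trivial
    obtain ⟨V, hVF, hV⟩ := hmem
    exact ⟨V, Finset.mem_coe.mp hVF, hV⟩
  choose g hgF hgmem using hpt
  have hletters : ∀ w w' : W f n, g w = g w' → ∀ j : Fin n, w.1 j = w'.1 j := by
    intro w w' hww' j
    obtain ⟨uu, huu, hVeq⟩ := hFsub (Finset.mem_coe.mpr (hgF w'))
    have h1 := hgmem w
    have h2 := hgmem w'
    rw [hww', hVeq] at h1
    rw [hVeq] at h2
    have hA : ∀ i : Fin n, ∃ a : X,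
        uu i = (fun ω : orbitClosure f => (ω : ℕ → X) 0) ⁻¹' Vof f a := by
      intro i
      obtain ⟨a, _, ha⟩ := huu i
      exact ⟨a, ha.symm⟩
    choose A hAeq using hA
    have key : ∀ (nn : ℕ),
        ((⟨fun k => f (nn + k), orbit_mem f _⟩ : orbitClosure f) ∈
          ⋂ i : Fin n, (shiftOn f)^[(i : ℕ)] ⁻¹' uu i) → f (nn + j) = A j := by
      intro nn hmem
      have hj := Set.mem_iInter.mp hmem j
      rw [hAeq j] at hj
      have hval : (((shiftOn f)^[(j : ℕ)]
          (⟨fun k => f (nn + k), orbit_mem f _⟩ : orbitClosure f) : orbitClosure f) : ℕ → X) 0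
          = f (nn + j) := by
        rw [shiftOn_iterate]
        show f (nn + (0 + (j : ℕ))) = f (nn + j)
        congr 1
        omega
      have hj' : (((shiftOn f)^[(j : ℕ)]
          (⟨fun k => f (nn + k), orbit_mem f _⟩ : orbitClosure f) : orbitClosure f) : ℕ → X) 0
          ∈ Vof f (A j) := hj
      rw [hval] at hj'
      exact eq_of_mem_Vof ⟨nn + (j : ℕ), rfl⟩ hj'
    have e1 : w.1 j = A j := by
      rw [w.2.choose_spec j]
      exact key _ h1
    have e2 : w'.1 j = A j := by
      rw [w'.2.choose_spec j]
      exact key _ h2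
    rw [e1, e2]
  have hginj : Function.Injective g := by
    intro w w' hww'
    apply Subtype.ext
    funext j
    exact hletters w w' hww' j
  have hcard : Nat.card (W f n) ≤ Nat.card (↑F : Set (Set (orbitClosure f))) := by
    haveI : Finite (↑F : Set (Set (orbitClosure f))) := F.finite_toSet.to_subtype
    exact Nat.card_le_card_of_injective (fun w => ⟨g w, hgF w⟩)
      (fun w w' h => hginj (congrArg Subtype.val h))
  calc C f n ≤ Nat.card (↑F : Set (Set (orbitClosure f))) := hcard
    _ = F.card := by rw [Nat.card_coe_set_eq, ncard_coe_finset]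

lemma lim_le_AE (hf : (Set.range f).Finite) : (((u_subadd hf).lim : ℝ) : EReal) ≤ AE f := by
  have hbound : (((u_subadd hf).lim : ℝ) : EReal) ≤ coverEntropy (shiftOn f) (U0 f) := by
    have hls : Filter.atTop.limsup (fun n : ℕ => ((u f n / n : ℝ) : EReal))
        = (((u_subadd hf).lim : ℝ) : EReal) :=
      Filter.Tendsto.limsup_eq
        ((continuous_coe_real_ereal.tendsto _).comp ((u_subadd hf).tendsto_lim u_bddBelow))
    rw [← hls]
    unfold Anqie.coverEntropy
    have hle : (fun n : ℕ => ((u f n / n : ℝ) : EReal)) ≤ᶠ[atTop]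
        (fun n : ℕ => ((Real.log (coverNum (iterJoin (shiftOn f) (U0 f) n)) / n : ℝ) : EReal)) := by
      filter_upwards with n
      rw [EReal.coe_le_coe_iff]
      have h1 : (0 : ℝ) < ((C f n : ℕ) : ℝ) := by exact_mod_cast C_pos hf n
      have h2 : ((C f n : ℕ) : ℝ) ≤ ((coverNum (iterJoin (shiftOn f) (U0 f) n) : ℕ) : ℝ) := by
        exact_mod_cast C_le_coverNum hf n
      exact div_le_div_of_nonneg_right (Real.log_le_log h1 h2) (Nat.cast_nonneg n)
    exact Filter.limsup_le_limsup hle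
  refine le_trans hbound ?_
  exact le_iSup₂_of_le (U0 f) (isOpenCover_U0 hf) le_rfl

lemma coverEntropy_le_lim (hf : (Set.range f).Finite) {𝒰 : Set (Set (orbitClosure f))}
    (h𝒰 : IsOpenCover 𝒰) :
    coverEntropy (shiftOn f) 𝒰 ≤ (((u_subadd hf).lim : ℝ) : EReal) := by
  classical
  haveI := compactSpace_orbitClosure f
  have step1 : ∀ ω : orbitClosure f, ∃ N : ℕ, ∃ U ∈ 𝒰,
      ∀ ω' : orbitClosure f, (∀ j : ℕ, j < N → (ω' : ℕ → X) j = (ω : ℕ → X) j) → ω' ∈ U := by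
    intro ω
    have hωU : ω ∈ ⋃₀ 𝒰 := by rw [h𝒰.2]; trivial
    obtain ⟨U, hU𝒰, hωU⟩ := hωU
    obtain ⟨U', hU'open, hU'pre⟩ := isOpen_induced_iff.mp (h𝒰.1 U hU𝒰)
    have hωU' : (ω : ℕ → X) ∈ U' := by rw [← hU'pre] at hωU; exact hωU
    obtain ⟨I, uu, hIu, hIsub⟩ := isOpen_pi_iff.mp hU'open _ hωU'
    refine ⟨I.sup id + 1, U, hU𝒰, fun ω' hω' => ?_⟩
    rw [← hU'pre]
    apply hIsub
    intro a haI
    rw [hω' a (Nat.lt_succ_of_le (Finset.le_sup (f := id) haI))]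
    exact (hIu a haI).2
  choose Nf Uf hUf𝒰 hUf using step1
  obtain ⟨t, ht⟩ := isCompact_univ.elim_finite_subcover
    (fun ω : orbitClosure f =>
      {ω' : orbitClosure f | ∀ j : Fin (Nf ω), (ω' : ℕ → X) (j : ℕ) = (ω : ℕ → X) (j : ℕ)})
    (fun ω => isOpen_cylSet hf _) (fun ω _ => Set.mem_iUnion.mpr ⟨ω, fun j => rfl⟩)
  set N := t.sup Nf with hN
  have uniform : ∀ ω : orbitClosure f, ∃ U ∈ 𝒰,
      ∀ ω' : orbitClosure f, (∀ j : ℕ, j < N → (ω' : ℕ → X) j = (ω : ℕ → X) j) → ω' ∈ U := by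
    intro ω
    obtain ⟨i, hit, hωi⟩ := Set.mem_iUnion₂.mp (ht (Set.mem_univ ω))
    refine ⟨Uf i, hUf𝒰 i, fun ω' hω' => ?_⟩
    apply hUf i
    intro j hj
    have hjN : j < N := lt_of_lt_of_le hj (Finset.le_sup hit)
    rw [hω' j hjN]
    exact hωi ⟨j, hj⟩
  choose Ug hUg𝒰 hUg using uniform
  have step3 : ∀ n : ℕ, coverNum (iterJoin (shiftOn f) 𝒰 n) ≤ C f (n + N) := by
    intro n
    haveI := (W_finite hf (n + N)).fintype
    have hsubw : ∀ (w : W f (n + N)) (j : Fin n),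
        (fun i : Fin N => w.1 ⟨(j : ℕ) + (i : ℕ), by omega⟩) ∈ W f N := by
      rintro ⟨w, hw⟩ j
      obtain ⟨n₀, hn₀⟩ := hw
      refine ⟨n₀ + (j : ℕ), fun i => ?_⟩
      show w ⟨(j : ℕ) + (i : ℕ), by omega⟩ = f (n₀ + (j : ℕ) + (i : ℕ))
      rw [hn₀ ⟨(j : ℕ) + (i : ℕ), by omega⟩]
      congr 1
      show n₀ + ((j : ℕ) + (i : ℕ)) = n₀ + (j : ℕ) + (i : ℕ)
      omega
    set pt : W f N → orbitClosure f :=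
      fun v => ⟨fun k => f (v.2.choose + k), orbit_mem f _⟩ with hptdef
    have hptval : ∀ (v : W f N) (i : ℕ) (hi : i < N),
        ((pt v : orbitClosure f) : ℕ → X) i = v.1 ⟨i, hi⟩ := by
      intro v i hi
      show f (v.2.choose + i) = v.1 ⟨i, hi⟩
      exact (v.2.choose_spec ⟨i, hi⟩).symm
    set G : W f (n + N) → Set (orbitClosure f) :=
      fun w => ⋂ j : Fin n, (shiftOn f)^[(j : ℕ)] ⁻¹' Ug (pt ⟨_, hsubw w j⟩) with hG
    have hGjoin : ∀ w, G w ∈ iterJoin (shiftOn f) 𝒰 n :=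
      fun w => ⟨fun j => Ug (pt ⟨_, hsubw w j⟩), fun j => hUg𝒰 _, rfl⟩
    have hGcov : ⋃₀ (↑(Finset.image G Finset.univ) : Set (Set (orbitClosure f))) = Set.univ := by
      apply Set.eq_univ_of_univ_subset
      intro ω _
      set w : W f (n + N) :=
        ⟨fun j : Fin (n + N) => (ω : ℕ → X) (j : ℕ), prefix_mem_W hf ω.2 (n + N)⟩ with hw
      refine ⟨G w, by simpa using Finset.mem_image_of_mem G (Finset.mem_univ w), ?_⟩
      rw [hG]
      apply Set.mem_iInter.mpr
      intro j
      rw [Set.mem_preimage]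
      apply hUg
      intro i hi
      rw [shiftOn_iterate, hptval _ i hi]
      show (ω : ℕ → X) (i + (j : ℕ)) = (ω : ℕ → X) ((j : ℕ) + i)
      rw [Nat.add_comm]
    refine le_trans (Nat.sInf_le ⟨Finset.image G Finset.univ, ?_, hGcov, rfl⟩) ?_
    · intro V hV
      simp only [Finset.coe_image, Set.mem_image] at hV
      obtain ⟨w, _, rfl⟩ := hV
      exact hGjoin w
    · calc (Finset.image G Finset.univ).card ≤ Finset.univ.card := Finset.card_image_le
        _ = C f (n + N) := by rw [Finset.card_univ, C, Nat.card_eq_fintype_card]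
  have hgt : Tendsto (fun n : ℕ => u f n / n + Real.log (C f N) / n)
      atTop (𝓝 ((u_subadd hf).lim + 0)) := by
    refine ((u_subadd hf).tendsto_lim u_bddBelow).add ?_
    have h1 : Tendsto (fun n : ℕ => Real.log (C f N) * (1 / (n : ℝ))) atTop
        (𝓝 (Real.log (C f N) * 0)) :=
      tendsto_const_nhds.mul tendsto_one_div_atTop_nhds_zero_nat
    simpa [div_eq_mul_inv] using h1
  rw [add_zero] at hgt
  have hls : Filter.atTop.limsup
      (fun n : ℕ => ((u f n / n + Real.log (C f N) / n : ℝ) : EReal))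
      = (((u_subadd hf).lim : ℝ) : EReal) :=
    Filter.Tendsto.limsup_eq ((continuous_coe_real_ereal.tendsto _).comp hgt)
  rw [← hls]
  unfold Anqie.coverEntropy
  have hle : (fun n : ℕ => ((Real.log (coverNum (iterJoin (shiftOn f) 𝒰 n)) / n : ℝ) : EReal))
      ≤ᶠ[atTop] (fun n : ℕ => ((u f n / n + Real.log (C f N) / n : ℝ) : EReal)) := by
    filter_upwards with n
    rw [EReal.coe_le_coe_iff]
    have hcn : coverNum (iterJoin (shiftOn f) 𝒰 n) ≤ C f n * C f N :=
      le_trans (step3 n) (C_subadd hf n N)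
    have hprod : Real.log ((C f n * C f N : ℕ) : ℝ) = Real.log (C f n) + Real.log (C f N) := by
      push_cast
      exact Real.log_mul (by exact_mod_cast (C_pos hf n).ne') (by exact_mod_cast (C_pos hf N).ne')
    have hlog : Real.log (coverNum (iterJoin (shiftOn f) 𝒰 n))
        ≤ Real.log (C f n) + Real.log (C f N) := by
      rcases Nat.eq_zero_or_pos (coverNum (iterJoin (shiftOn f) 𝒰 n)) with h0 | hpos
      · have h00 := Real.log_natCast_nonneg (C f n * C f N)
        rw [hprod] at h00
        rw [h0]
        simpa using h00
      · rw [← hprod]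
        exact Real.log_le_log (by exact_mod_cast hpos) (by exact_mod_cast hcn)
    calc Real.log (coverNum (iterJoin (shiftOn f) 𝒰 n)) / n
        ≤ (Real.log (C f n) + Real.log (C f N)) / n :=
          div_le_div_of_nonneg_right hlog (Nat.cast_nonneg n)
      _ = u f n / n + Real.log (C f N) / n := by rw [add_div]; rfl
  exact Filter.limsup_le_limsup hle

lemma AE_eq_lim (hf : (Set.range f).Finite) : AE f = (((u_subadd hf).lim : ℝ) : EReal) := by
  apply le_antisymm
  · exact iSup₂_le fun 𝒰 h𝒰 => coverEntropy_le_lim hf h𝒰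
  · exact lim_le_AE hf

end Topo

end AnqieProof

/-- For a compact Hausdorff space `X` and a finite-range map
`f : ℕ → X`, the limit `lim_m (log |R_m(f)|)/m` exists and equals `AE(f)`, where
`R_m(f)` is the set of `m`-blocks of `f` starting at multiples of `m`. -/
theorem anqie_entropy_eq_lim_log_regular_blocks {X : Type*} [TopologicalSpace X]
    [CompactSpace X] [T2Space X] (f : ℕ → X) (hf : (Set.range f).Finite) :
    Filter.Tendsto
      (fun m : ℕ =>
        ((Real.log (Nat.card {w : Fin m → X // ∃ l : ℕ, ∀ j : Fin m, w j = f (l * m + j)}) / m : ℝ) :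
          EReal))
      Filter.atTop (nhds (Anqie.AE f)) := by
  rw [AnqieProof.AE_eq_lim hf]
  have hr : ∀ m : ℕ,
      Nat.card {w : Fin m → X // ∃ l : ℕ, ∀ j : Fin m, w j = f (l * m + (j : ℕ))}
        = AnqieProof.r f m := fun m => rfl
  have ht := AnqieProof.tendsto_log_r hf
  have hc := (continuous_coe_real_ereal.tendsto _).comp ht
  simp only [hr]
  exact hc
end
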